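/- arXiv:2603.05082 — 3 statements merged into one kernel-verified Lean document; each statement's English description precedes it below -/
import Mathlib

section
/- Fix a height h ≥ 1, a label 𝛕 and a non-interacting SWAP 𝛔 with indices I. Let T′ and T be the binary trees of height h with labels 𝛔𝛕 and 𝛕, let S be the interpolation complex between them, and let T′S, ST be further disjoint copies of the binary trees with labels 𝛔𝛕 and 𝛕. Define g₁ on edges by g₁‖τ̄σs, T′S⟩ = ‖τ̄σs, T′⟩ + ‖τ̄σ⋆σs, S⟩ and g₁‖τ̄s, ST⟩ = ‖τ̄σ⋆s, S⟩ + ‖τ̄s, T⟩, and g₀ by the same formulas on vertices. Then g = (g₁, g₀) is a chain map from T′S ⊕ ST to T′ ⊕ S ⊕ T (that is, g₀∘∂ = ∂∘g₁), and the mapping cone C of g satisfies: H₂(C) = 0, H₁(C) = 0, H₀(C) ≅ F₂; moreover every column of the matrix of ∂₂ᶜ has at most 4 nonzero entries and every row at most 4, and every column of ∂₁ᶜ has at most 2 nonzero entries and every row at most 9. -/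
abbrev F2 := ZMod 2

section BasicDefs
variable {α β : Type*} [Fintype α] [Fintype β]

/-- Number of nonzero entries in column `b` of matrix `M`. -/
def colW (M : Matrix α β F2) (b : β) : ℕ := (Finset.univ.filter fun a => M a b ≠ 0).card

/-- Number of nonzero entries in row `a` of matrix `M`. -/
def rowW (M : Matrix α β F2) (a : α) : ℕ := (Finset.univ.filter fun b => M a b ≠ 0).card

/-- `H₂(C) = ker ∂₂ = 0`. -/
def H2Trivial {C2 C1 : Type*} [Fintype C2] [Fintype C1] (d2 : Matrix C1 C2 F2) : Prop :=
  LinearMap.ker d2.mulVecLin = ⊥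

/-- `H₁(C) = ker ∂₁ / im ∂₂ = 0`. -/
def H1Trivial {C2 C1 C0 : Type*} [Fintype C2] [Fintype C1] [Fintype C0]
    (d2 : Matrix C1 C2 F2) (d1 : Matrix C0 C1 F2) : Prop :=
  LinearMap.ker d1.mulVecLin = LinearMap.range d2.mulVecLin

/-- `H₀(C) ≅ F₂`. -/
def H0IsF2 {C1 C0 : Type*} [Fintype C1] [Fintype C0] (d1 : Matrix C0 C1 F2) : Prop :=
  Nonempty (((C0 → F2) ⧸ LinearMap.range d1.mulVecLin) ≃ₗ[F2] F2)

end BasicDefs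

/-- The action of a permutation of positions on a list: `(π · l) j = l (π⁻¹ j)`. -/
def permList {α : Type*} [Inhabited α] (π : Equiv.Perm ℕ) (l : List α) : List α :=
  (List.range l.length).map fun j => l.getD (π.symm j) default

/-- A label of height `h`: a family of permutations `τ_ℓ` of the positions `{0, …, ℓ-1}`
(0-indexed); each `τ_ℓ` fixes all positions `≥ ℓ`. -/
def IsLabel (h : ℕ) (τ : ℕ → Equiv.Perm ℕ) : Prop :=
  ∀ ℓ j, ℓ ≤ h → ℓ ≤ j → τ ℓ j = j

/-- `σ` is the non-interacting SWAP of height `h` with (0-indexed) indices `I`. -/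
def IsNonInteractingSwap (h : ℕ) (I : Finset ℕ) (σ : ℕ → Equiv.Perm ℕ) : Prop :=
  (∀ i ∈ I, i + 2 ≤ h) ∧
  (∀ i ∈ I, ∀ j ∈ I, i ≠ j → i + 2 ≤ j ∨ j + 2 ≤ i) ∧
  (∀ ℓ, ∀ i ∈ I, i + 2 ≤ ℓ → σ ℓ i = i + 1 ∧ σ ℓ (i + 1) = i) ∧
  (∀ ℓ j, (¬∃ i ∈ I, i + 2 ≤ ℓ ∧ (j = i ∨ j = i + 1)) → σ ℓ j = j)

/-- The map `σ⋆` from bit strings to starred strings (`⋆` is `none`). -/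
def sigmaStar (I : Finset ℕ) (s : List Bool) : List (Option Bool) :=
  if s ≠ [] ∧ (s.length - 1) ∈ I then (s.dropLast.map some) ++ [none] else s.map some

/-- A finiteness helper: subtypes of lists with bounded length are finite. -/
noncomputable def fintypeListSub {α : Type*} [Finite α] (n : ℕ) (P : List α → Prop)
    (hP : ∀ l, P l → l.length ≤ n) : Fintype {l : List α // P l} :=
  have : Finite {l : List α // P l} :=
    Set.Finite.to_subtype ((List.finite_length_le α n).subset fun l hl => hP l hl)
  Fintype.ofFinite _

/-- Vertices of the binary tree of height `h` with labels `𝛕`, indexed by the label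
strings `τ̄s`, `‖s‖ ≤ h` (equivalently, all bit strings of length at most `h`). -/
abbrev TreeV (h : ℕ) := {l : List Bool // l.length ≤ h}

/-- Edges of the binary tree of height `h`, indexed by label strings `τ̄s`, `1 ≤ ‖s‖ ≤ h`. -/
abbrev TreeE (h : ℕ) := {l : List Bool // 1 ≤ l.length ∧ l.length ≤ h}

noncomputable instance (h : ℕ) : Fintype (TreeV h) := fintypeListSub h _ fun _ hl => hl
noncomputable instance (h : ℕ) : Fintype (TreeE h) := fintypeListSub h _ fun _ hl => hl.2

/-- The second endpoint of the tree edge with label string `e`: the edge `‖τ̄s⟩` (where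
`s = τe`) has endpoints `|τ̄s⟩ = |e⟩` and `|τ̄(ωs)⟩ = parentStr τ e`. -/
def parentStr (τ : ℕ → Equiv.Perm ℕ) (e : List Bool) : List Bool :=
  permList ((τ (e.length - 1))⁻¹) ((permList (τ e.length) e).dropLast)

/-- The differential of the binary tree of height `h` with labels `𝛕`:
`∂ ‖τ̄s⟩ = |τ̄s⟩ + |τ̄(ωs)⟩`. -/
def treeMat (h : ℕ) (τ : ℕ → Equiv.Perm ℕ) : Matrix (TreeV h) (TreeE h) F2 :=
  fun v e => if v.1 = e.1 ∨ v.1 = parentStr τ e.1 then 1 else 0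

/-- `u` is a starred string in the image of `σ⋆`: only the last entry may be the
placeholder `⋆ = none`, and (for nonempty `u`) the last entry is `⋆` iff the last
position belongs to `I`. -/
def IsStarStr (I : Finset ℕ) (u : List (Option Bool)) : Prop :=
  (∀ i, i + 1 < u.length → u.getD i none ≠ none) ∧
  (u ≠ [] → ((u.length - 1) ∈ I ↔ u.getD (u.length - 1) none = none))

/-- Vertices of the interpolation complex `S` between the trees with labels `𝛔𝛕` and `𝛕`,
indexed by the label strings `τ̄(σ⋆ s)`, `‖s‖ ≤ h`. -/
abbrev SV (h : ℕ) (I : Finset ℕ) (τ : ℕ → Equiv.Perm ℕ) :=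
  {y : List (Option Bool) // y.length ≤ h ∧ IsStarStr I (permList (τ y.length) y)}

/-- Edges of the interpolation complex `S`, indexed by the label strings `τ̄(σ⋆ s)`,
`1 ≤ ‖s‖ ≤ h`. -/
abbrev SE (h : ℕ) (I : Finset ℕ) (τ : ℕ → Equiv.Perm ℕ) :=
  {y : List (Option Bool) // 1 ≤ y.length ∧ y.length ≤ h ∧
    IsStarStr I (permList (τ y.length) y)}

noncomputable instance (h : ℕ) (I : Finset ℕ) (τ : ℕ → Equiv.Perm ℕ) :
    Fintype (SV h I τ) := fintypeListSub h _ fun _ hl => hl.1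

noncomputable instance (h : ℕ) (I : Finset ℕ) (τ : ℕ → Equiv.Perm ℕ) :
    Fintype (SE h I τ) := fintypeListSub h _ fun _ hl => hl.2.1

/-- Remove the last entry of a starred string and forget the starring: this recovers
`ωs` from `σ⋆s`. -/
def plainDrop (u : List (Option Bool)) : List Bool :=
  u.dropLast.map fun o => o.getD false

/-- The second endpoint of the interpolation edge with label string `y = τ̄(σ⋆s)`:
`∂ˢ‖τ̄σ⋆s⟩ = |τ̄σ⋆s⟩ + |τ̄σ⋆(ωs)⟩`, and `τ̄σ⋆(ωs) = sParent I τ y`. -/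
def sParent (I : Finset ℕ) (τ : ℕ → Equiv.Perm ℕ) (y : List (Option Bool)) :
    List (Option Bool) :=
  permList ((τ (y.length - 1))⁻¹) (sigmaStar I (plainDrop (permList (τ y.length) y)))

/-- The differential of the interpolation complex `S`. -/
def sMat (h : ℕ) (I : Finset ℕ) (τ : ℕ → Equiv.Perm ℕ) :
    Matrix (SV h I τ) (SE h I τ) F2 :=
  fun v e => if v.1 = e.1 ∨ v.1 = sParent I τ e.1 then 1 else 0

/-- The label string `τ̄(σ⋆(τ x))` of the `S`-term of the image of the chain map `g` on
the edge/vertex with label string `x`: for a `T′S`-edge `x = τ̄σs` (so `σs = τx`) this is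
`τ̄σ⋆σs`, and for an `ST`-edge `x = τ̄s` (so `s = τx`) this is `τ̄σ⋆s`. -/
def starLabel (I : Finset ℕ) (τ : ℕ → Equiv.Perm ℕ) (x : List Bool) :
    List (Option Bool) :=
  permList ((τ x.length)⁻¹) (sigmaStar I (permList (τ x.length) x))

section Cone
variable (h : ℕ) (I : Finset ℕ) (σ τ : ℕ → Equiv.Perm ℕ)

/-- Differential of `A = T′S ⊕ ST` (two fresh copies of the binary trees with labels
`𝛔𝛕` and `𝛕`). -/
def dA : Matrix (TreeV h ⊕ TreeV h) (TreeE h ⊕ TreeE h) F2 :=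
  Matrix.fromBlocks (treeMat h fun ℓ => σ ℓ * τ ℓ) 0 0 (treeMat h τ)

/-- Differential of `B = T′ ⊕ S ⊕ T`. -/
def dB : Matrix (TreeV h ⊕ (SV h I τ ⊕ TreeV h)) (TreeE h ⊕ (SE h I τ ⊕ TreeE h)) F2 :=
  Matrix.fromBlocks (treeMat h fun ℓ => σ ℓ * τ ℓ) 0 0
    (Matrix.fromBlocks (sMat h I τ) 0 0 (treeMat h τ))

/-- The chain map `g₁` on edges:
`g₁‖τ̄σs, T′S⟩ = ‖τ̄σs, T′⟩ + ‖τ̄σ⋆σs, S⟩` and `g₁‖τ̄s, ST⟩ = ‖τ̄σ⋆s, S⟩ + ‖τ̄s, T⟩`. -/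
def g1 : Matrix (TreeE h ⊕ (SE h I τ ⊕ TreeE h)) (TreeE h ⊕ TreeE h) F2 :=
  fun eb ea =>
    match eb, ea with
    | Sum.inl x', Sum.inl x => if x' = x then 1 else 0
    | Sum.inr (Sum.inl y), Sum.inl x => if y.1 = starLabel I τ x.1 then 1 else 0
    | Sum.inr (Sum.inl y), Sum.inr x => if y.1 = starLabel I τ x.1 then 1 else 0
    | Sum.inr (Sum.inr x'), Sum.inr x => if x' = x then 1 else 0
    | _, _ => 0

/-- The chain map `g₀` on vertices (same formulas as `g₁`). -/
def g0 : Matrix (TreeV h ⊕ (SV h I τ ⊕ TreeV h)) (TreeV h ⊕ TreeV h) F2 :=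
  fun vb va =>
    match vb, va with
    | Sum.inl x', Sum.inl x => if x' = x then 1 else 0
    | Sum.inr (Sum.inl y), Sum.inl x => if y.1 = starLabel I τ x.1 then 1 else 0
    | Sum.inr (Sum.inl y), Sum.inr x => if y.1 = starLabel I τ x.1 then 1 else 0
    | Sum.inr (Sum.inr x'), Sum.inr x => if x' = x then 1 else 0
    | _, _ => 0

/-- The degree-2 differential of the mapping cone `C` of `g`: `∂₂ a = (∂ᴬ a, g₁ a)`. -/
def coneD2 :
    Matrix ((TreeV h ⊕ TreeV h) ⊕ (TreeE h ⊕ (SE h I τ ⊕ TreeE h)))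
      (TreeE h ⊕ TreeE h) F2 :=
  fun r c => Sum.elim (fun va => dA h σ τ va c) (fun eb => g1 h I τ eb c) r

/-- The degree-1 differential of the mapping cone `C` of `g`:
`∂₁ (a₀, b₁) = g₀ a₀ + ∂ᴮ b₁`. -/
def coneD1 :
    Matrix (TreeV h ⊕ (SV h I τ ⊕ TreeV h))
      ((TreeV h ⊕ TreeV h) ⊕ (TreeE h ⊕ (SE h I τ ⊕ TreeE h))) F2 :=
  fun v r => Sum.elim (fun va => g0 h I τ v va) (fun eb => dB h I σ τ v eb) r

end Cone

section PermListLemmas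
variable {α : Type*} [Inhabited α]

@[simp] lemma permList_length (π : Equiv.Perm ℕ) (l : List α) :
    (permList π l).length = l.length := by simp [permList]

lemma permList_getElem (π : Equiv.Perm ℕ) (l : List α) (j : ℕ)
    (hj : j < (permList π l).length) :
    (permList π l)[j] = l.getD (π.symm j) default := by
  simp [permList]

lemma permList_getD (π : Equiv.Perm ℕ) (l : List α) {j : ℕ} (hj : j < l.length) (d : α) :
    (permList π l).getD j d = l.getD (π.symm j) default := by
  rw [List.getD_eq_getElem _ _ (by simpa using hj), permList_getElem]

/-- `π` fixes all positions `≥ n`. -/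
def PFix (π : Equiv.Perm ℕ) (n : ℕ) : Prop := ∀ j, n ≤ j → π j = j

lemma PFix.symm {π : Equiv.Perm ℕ} {n : ℕ} (h : PFix π n) : PFix π.symm n := by
  intro j hj
  exact (Equiv.symm_apply_eq π).mpr (h j hj).symm

lemma PFix.lt {π : Equiv.Perm ℕ} {n : ℕ} (h : PFix π n) {j : ℕ} (hj : j < n) : π j < n := by
  by_contra hc
  push_neg at hc
  have h2 := h.symm (π j) hc
  simp only [Equiv.symm_apply_apply] at h2
  omega

lemma PFix.mul {π ρ : Equiv.Perm ℕ} {n : ℕ} (hπ : PFix π n) (hρ : PFix ρ n) :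
    PFix (π * ρ) n := by
  intro j hj
  simp [Equiv.Perm.mul_apply, hρ j hj, hπ j hj]

lemma PFix.inv {π : Equiv.Perm ℕ} {n : ℕ} (h : PFix π n) : PFix π⁻¹ n := h.symm

@[simp] lemma permList_one (l : List α) : permList 1 l = l := by
  apply List.ext_getElem (by simp)
  intro j h1 h2
  rw [permList_getElem]
  simp [List.getD_eq_getElem _ _ h2, List.getElem?_eq_getElem h2, Equiv.Perm.one_symm]

lemma permList_comp {π ρ : Equiv.Perm ℕ} {l : List α}
    (hπ : ∀ j, j < l.length → π.symm j < l.length) :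
    permList π (permList ρ l) = permList (π * ρ) l := by
  apply List.ext_getElem (by simp)
  intro j h1 h2
  rw [permList_getElem, permList_getElem]
  have hj : j < l.length := by simpa using h2
  rw [permList_getD _ _ (hπ j hj)]
  congr 1

lemma permList_cancel_left {π : Equiv.Perm ℕ} {l : List α} (h : PFix π l.length) :
    permList π (permList π⁻¹ l) = l := by
  rw [permList_comp (fun j hj => h.symm.lt hj), mul_inv_cancel, permList_one]

lemma permList_cancel_right {π : Equiv.Perm ℕ} {l : List α} (h : PFix π l.length) :
    permList π⁻¹ (permList π l) = l := by
  have : (π⁻¹).symm = π := rfl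
  rw [permList_comp (fun j hj => by rw [this]; exact h.lt hj), inv_mul_cancel, permList_one]

lemma permList_inj {π : Equiv.Perm ℕ} {l l' : List α} (hl : l.length = l'.length)
    (h : PFix π l.length) (heq : permList π l = permList π l') : l = l' := by
  have := congrArg (permList π⁻¹) heq
  rwa [permList_cancel_right h, permList_cancel_right (hl ▸ h)] at this

end PermListLemmas
section Forest
variable {V E : Type*} [Fintype V] [Fintype E] [DecidableEq V] [DecidableEq E]

/-- Abstract forest (rooted tree) incidence matrix. -/
def forestMat (ι p : E → V) : Matrix V E F2 :=
  fun v e => if v = ι e ∨ v = p e then 1 else 0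

/-- Sum-of-coordinates functional. -/
def sumF (V : Type*) [Fintype V] : ((V → F2) →ₗ[F2] F2) where
  toFun x := ∑ v, x v
  map_add' x y := by simp [Finset.sum_add_distrib]
  map_smul' c x := by simp [Finset.mul_sum]

variable {ι p : E → V} {r : V} {d : V → ℕ}

lemma forest_ker (hι : Function.Injective ι) (hd : ∀ e, d (p e) < d (ι e)) :
    LinearMap.ker (forestMat ι p).mulVecLin = ⊥ := by
  rw [LinearMap.ker_eq_bot']
  intro x hx
  have hx' : ∀ v, ∑ e, forestMat ι p v e * x e = 0 := fun v => congrFun hx v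
  set D := Finset.univ.sup (fun e : E => d (ι e)) with hD
  have key : ∀ n : ℕ, ∀ e : E, D < d (ι e) + n → x e = 0 := by
    intro n
    induction n with
    | zero =>
      intro e he
      exfalso
      have : d (ι e) ≤ D := Finset.le_sup (f := fun e : E => d (ι e)) (Finset.mem_univ e)
      omega
    | succ n ih =>
      intro e he
      have hsum := hx' (ι e)
      have hval : ∑ e', forestMat ι p (ι e) e' * x e' = x e := by
        rw [Finset.sum_eq_single e]
        · simp [forestMat]
        · intro e' _ hne
          rcases eq_or_ne (ι e) (ι e') with h1 | h1
          · exact absurd (hι h1) (fun h => hne h.symm)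
          rcases eq_or_ne (ι e) (p e') with h2 | h2
          · have : d (ι e) < d (ι e') := h2 ▸ hd e'
            rw [ih e' (by omega), mul_zero]
          · simp [forestMat, h1, h2]
        · simp
      rw [hval] at hsum
      exact hsum
  funext e
  exact key (D + 1) e (by omega)

lemma ite_or_add {P Q : Prop} [Decidable P] [Decidable Q] (h : ¬(P ∧ Q)) :
    (if P ∨ Q then (1 : F2) else 0) = (if P then 1 else 0) + (if Q then 1 else 0) := by
  by_cases hp : P <;> by_cases hq : Q <;> simp_all

lemma forest_colsum (hne : ∀ e, ι e ≠ p e) (e : E) :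
    ∑ v, forestMat ι p v e = 0 := by
  have : ∀ v, forestMat ι p v e =
      (if v = ι e then (1 : F2) else 0) + (if v = p e then 1 else 0) := by
    intro v
    exact ite_or_add (by rintro ⟨h1, h2⟩; exact hne e (h1 ▸ h2 ▸ rfl))
  simp only [this, Finset.sum_add_distrib, Finset.sum_ite_eq', Finset.mem_univ, if_true]
  decide

lemma forest_sum_mulVec (hne : ∀ e, ι e ≠ p e) (x : E → F2) :
    ∑ v, ((forestMat ι p).mulVec x) v = 0 := by
  simp only [Matrix.mulVec, dotProduct]
  rw [Finset.sum_comm]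
  rw [Finset.sum_congr rfl (fun e _ => by rw [← Finset.sum_mul, forest_colsum hne, zero_mul])]
  simp

lemma sumF_surjective (hr : Nonempty V) : Function.Surjective (sumF V) := by
  intro c
  obtain ⟨v⟩ := hr
  refine ⟨fun w => if w = v then c else 0, ?_⟩
  simp [sumF, Finset.sum_ite_eq']

lemma forest_range (hι : Function.Injective ι) (hd : ∀ e, d (p e) < d (ι e))
    (hr : ∀ e, ι e ≠ r) (hsurj : ∀ v, v ≠ r → ∃ e, ι e = v) :
    LinearMap.range (forestMat ι p).mulVecLin = LinearMap.ker (sumF V) := by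
  have hne : ∀ e, ι e ≠ p e := fun e h => by have := hd e; rw [← h] at this; omega
  have hle : LinearMap.range (forestMat ι p).mulVecLin ≤ LinearMap.ker (sumF V) := by
    rintro y ⟨x, rfl⟩
    simp only [LinearMap.mem_ker, sumF, LinearMap.coe_mk, AddHom.coe_mk]
    exact forest_sum_mulVec hne x
  have hcardE : Fintype.card E = Fintype.card V - 1 := by
    have : Function.Bijective (fun e : E => (⟨ι e, hr e⟩ : {v : V // v ≠ r})) := by
      constructor
      · intro a b hab
        exact hι (congrArg Subtype.val hab)
      · rintro ⟨v, hv⟩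
        obtain ⟨e, he⟩ := hsurj v hv
        exact ⟨e, Subtype.ext he⟩
    have h1 : Fintype.card E = Fintype.card {v : V // v ≠ r} := Fintype.card_of_bijective this
    have h2 : Fintype.card {v : V // ¬ (v = r)} = Fintype.card V - Fintype.card {v : V // v = r} :=
      Fintype.card_subtype_compl _
    rw [h1]
    simp only [ne_eq]
    rw [h2, Fintype.card_subtype_eq]
  apply Submodule.eq_of_le_of_finrank_eq hle
  have hrk1 : Module.finrank F2 (LinearMap.range (forestMat ι p).mulVecLin) =
      Fintype.card E := by
    have := LinearMap.finrank_range_add_finrank_ker (forestMat ι p).mulVecLin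
    rw [forest_ker hι hd] at this
    simp only [finrank_bot, add_zero] at this
    rw [this, Module.finrank_fintype_fun_eq_card]
  have hsur : Function.Surjective (sumF V) := sumF_surjective ⟨r⟩
  have hrk2 : Module.finrank F2 (LinearMap.ker (sumF V)) = Fintype.card V - 1 := by
    have := LinearMap.finrank_range_add_finrank_ker (sumF V)
    rw [LinearMap.range_eq_top.mpr hsur] at this
    simp only [finrank_top, Module.finrank_self] at this
    rw [Module.finrank_fintype_fun_eq_card] at this
    have hV : 1 ≤ Fintype.card V := Fintype.card_pos_iff.mpr ⟨r⟩
    omega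
  rw [hrk1, hrk2, hcardE]

lemma forest_exists_preimage (hι : Function.Injective ι) (hd : ∀ e, d (p e) < d (ι e))
    (hr : ∀ e, ι e ≠ r) (hsurj : ∀ v, v ≠ r → ∃ e, ι e = v)
    (x : V → F2) (hx : ∑ v, x v = 0) : ∃ y, (forestMat ι p).mulVec y = x := by
  have hmem : x ∈ LinearMap.ker (sumF V) := by
    simp only [LinearMap.mem_ker, sumF, LinearMap.coe_mk, AddHom.coe_mk]
    exact hx
  rw [← forest_range hι hd hr hsurj] at hmem
  obtain ⟨y, hy⟩ := hmem
  exact ⟨y, hy⟩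

end Forest
set_option linter.unusedSectionVars false

section StarLemmas

@[simp] lemma sigmaStar_length (I : Finset ℕ) (s : List Bool) :
    (sigmaStar I s).length = s.length := by
  unfold sigmaStar
  split
  · rename_i hs
    have hpos : 0 < s.length := List.length_pos_iff.mpr hs.1
    simp [List.length_dropLast]
    omega
  · simp

@[simp] lemma plainDrop_length (u : List (Option Bool)) :
    (plainDrop u).length = u.length - 1 := by
  simp [plainDrop]

lemma getD_dropLast {α : Type*} (l : List α) (j : ℕ) (hj : j < l.length - 1) (d : α) :
    l.dropLast.getD j d = l.getD j d := by
  rw [List.getD_eq_getElem _ _ (by simp; omega), List.getD_eq_getElem _ _ (by omega)]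
  exact List.getElem_dropLast (by simp; omega)

lemma plainDrop_sigmaStar (I : Finset ℕ) (s : List Bool) :
    plainDrop (sigmaStar I s) = s.dropLast := by
  unfold sigmaStar plainDrop
  split
  · rw [List.dropLast_concat, List.map_map]
    simp [Function.comp_def]
  · rw [← List.map_dropLast, List.map_map]
    simp [Function.comp_def]

lemma isStarStr_sigmaStar (I : Finset ℕ) (s : List Bool) :
    IsStarStr I (sigmaStar I s) := by
  constructor
  · intro i hi
    rw [sigmaStar_length] at hi
    unfold sigmaStar
    split
    · rename_i hs
      have hpos : 0 < s.length := List.length_pos_iff.mpr hs.1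
      rw [List.getD_append _ _ _ _ (by simp only [List.length_map, List.length_dropLast]; omega)]
      rw [List.getD_eq_getElem _ _ (by simp only [List.length_map, List.length_dropLast]; omega)]
      simp
    · rw [List.getD_eq_getElem _ _ (by simp only [List.length_map]; omega)]
      simp
  · intro hne
    rw [sigmaStar_length]
    unfold sigmaStar
    split
    · rename_i hs
      have hpos : 0 < s.length := List.length_pos_iff.mpr hs.1
      have hlen : (s.dropLast.map some).length = s.length - 1 := by simp
      constructor
      · intro _
        rw [List.getD_eq_getElem _ _ (by simp only [List.length_append, List.length_map,
          List.length_dropLast, List.length_cons, List.length_nil]; omega)]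
        rw [List.getElem_append_right (by omega)]
        simp [hlen]
      · intro _; exact hs.2
    · rename_i hs
      push_neg at hs
      have hsne : s ≠ [] := by
        intro h; subst h; simp [sigmaStar] at hne
      constructor
      · intro hI
        exact absurd hI (hs hsne)
      · intro hlast
        exfalso
        rw [List.getD_eq_getElem _ _ (by have hpos : 0 < s.length := List.length_pos_iff.mpr hsne; simp only [List.length_map]; omega)] at hlast
        simp at hlast
end StarLemmas

section SigmaFacts
variable {h : ℕ} {I : Finset ℕ} {σ : ℕ → Equiv.Perm ℕ}

lemma sigma_pfix (hσ : IsNonInteractingSwap h I σ) (ℓ : ℕ) : PFix (σ ℓ) ℓ := by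
  intro j hj
  apply hσ.2.2.2
  rintro ⟨i, hi, h2, h3⟩
  omega

lemma sigma_invol (hσ : IsNonInteractingSwap h I σ) (ℓ j : ℕ) : σ ℓ (σ ℓ j) = j := by
  obtain ⟨h1, h2, h3, h4⟩ := hσ
  by_cases hc : ∃ i ∈ I, i + 2 ≤ ℓ ∧ (j = i ∨ j = i + 1)
  · obtain ⟨i, hi, hil, hj⟩ := hc
    rcases hj with rfl | rfl
    · rw [(h3 ℓ j hi hil).1, (h3 ℓ j hi hil).2]
    · rw [(h3 ℓ i hi hil).2, (h3 ℓ i hi hil).1]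
  · rw [h4 ℓ j hc, h4 ℓ j hc]

lemma sigma_symm (hσ : IsNonInteractingSwap h I σ) (ℓ j : ℕ) :
    (σ ℓ).symm j = σ ℓ j := by
  rw [Equiv.symm_apply_eq, sigma_invol hσ]

lemma sigma_inv_symm (hσ : IsNonInteractingSwap h I σ) (ℓ j : ℕ) :
    ((σ ℓ)⁻¹ : Equiv.Perm ℕ).symm j = σ ℓ j := rfl

/-- When `ℓ-2 ∉ I` (or `ℓ < 2`), `σ ℓ` and `σ (ℓ-1)` agree everywhere. -/
lemma sigma_agree_A (hσ : IsNonInteractingSwap h I σ) {ℓ : ℕ}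
    (hA : ℓ < 2 ∨ (ℓ - 2) ∉ I) (j : ℕ) : σ ℓ j = σ (ℓ - 1) j := by
  obtain ⟨h1, h2, h3, h4⟩ := hσ
  by_cases hc : ∃ i ∈ I, i + 2 ≤ ℓ - 1 ∧ (j = i ∨ j = i + 1)
  · obtain ⟨i, hi, hil, hj⟩ := hc
    rcases hj with rfl | rfl
    · rw [(h3 ℓ j hi (by omega)).1, (h3 (ℓ-1) j hi hil).1]
    · rw [(h3 ℓ i hi (by omega)).2, (h3 (ℓ-1) i hi hil).2]
  · have hc2 : ¬∃ i ∈ I, i + 2 ≤ ℓ ∧ (j = i ∨ j = i + 1) := by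
      rintro ⟨i, hi, hil, hj⟩
      rcases Nat.lt_or_ge (i+2) ℓ with hl | hl
      · exact hc ⟨i, hi, by omega, hj⟩
      · have : i = ℓ - 2 := by omega
        rcases hA with hA | hA
        · omega
        · exact hA (this ▸ hi)
    rw [h4 ℓ j hc2, h4 (ℓ-1) j hc]

/-- When `ℓ-2 ∈ I`, `σ ℓ` and `σ (ℓ-1)` agree on positions `≤ ℓ-3`. -/
lemma sigma_agree_B (hσ : IsNonInteractingSwap h I σ) {ℓ : ℕ}
    (hB : (ℓ - 2) ∈ I) (hl2 : 2 ≤ ℓ) {k : ℕ} (hk : k + 3 ≤ ℓ) : σ ℓ k = σ (ℓ - 1) k := by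
  obtain ⟨h1, h2, h3, h4⟩ := hσ
  by_cases hc : ∃ i ∈ I, i + 2 ≤ ℓ - 1 ∧ (k = i ∨ k = i + 1)
  · obtain ⟨i, hi, hil, hj⟩ := hc
    rcases hj with rfl | rfl
    · rw [(h3 ℓ k hi (by omega)).1, (h3 (ℓ-1) k hi hil).1]
    · rw [(h3 ℓ i hi (by omega)).2, (h3 (ℓ-1) i hi hil).2]
  · have hc2 : ¬∃ i ∈ I, i + 2 ≤ ℓ ∧ (k = i ∨ k = i + 1) := by
      rintro ⟨i, hi, hil, hj⟩
      rcases Nat.lt_or_ge (i+2) ℓ with hl | hl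
      · exact hc ⟨i, hi, by omega, hj⟩
      · omega
    rw [h4 ℓ k hc2, h4 (ℓ-1) k hc]

/-- When `ℓ-2 ∈ I`, `σ (ℓ-1)` maps positions `≤ ℓ-3` to positions `≤ ℓ-3`. -/
lemma sigma_lt_B (hσ : IsNonInteractingSwap h I σ) {ℓ : ℕ}
    (hB : (ℓ - 2) ∈ I) (hl2 : 2 ≤ ℓ) {j : ℕ} (hj : j + 3 ≤ ℓ) : σ (ℓ - 1) j + 3 ≤ ℓ := by
  obtain ⟨h1, h2, h3, h4⟩ := hσ
  by_cases hc : ∃ i ∈ I, i + 2 ≤ ℓ - 1 ∧ (j = i ∨ j = i + 1)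
  · obtain ⟨i, hi, hil, hij⟩ := hc
    have hne : i ≠ ℓ - 2 := by omega
    have := h2 i hi (ℓ-2) hB hne
    rcases hij with rfl | rfl
    · rw [(h3 (ℓ-1) j hi hil).1]; omega
    · rw [(h3 (ℓ-1) i hi hil).2]; omega
  · rw [h4 (ℓ-1) j hc]; omega

end SigmaFacts
section CoreKey
set_option maxHeartbeats 1000000
variable {h : ℕ} {I : Finset ℕ} {σ τ : ℕ → Equiv.Perm ℕ}

@[simp] lemma permList_nil {α : Type*} [Inhabited α] (π : Equiv.Perm ℕ) :
    permList π ([] : List α) = [] := by simp [permList]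

@[simp] lemma sigmaStar_nil (I : Finset ℕ) : sigmaStar I [] = [] := by simp [sigmaStar]

@[simp] lemma parentStr_length (υ : ℕ → Equiv.Perm ℕ) (e : List Bool) :
    (parentStr υ e).length = e.length - 1 := by simp [parentStr]

@[simp] lemma starLabel_length (I : Finset ℕ) (τ : ℕ → Equiv.Perm ℕ) (x : List Bool) :
    (starLabel I τ x).length = x.length := by simp [starLabel]

@[simp] lemma sParent_length (I : Finset ℕ) (τ : ℕ → Equiv.Perm ℕ) (y : List (Option Bool)) :
    (sParent I τ y).length = y.length - 1 := by simp [sParent]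

@[simp] lemma starLabel_nil (I : Finset ℕ) (τ : ℕ → Equiv.Perm ℕ) :
    starLabel I τ [] = [] := by simp [starLabel]

lemma label_pfix (hτ : IsLabel h τ) {ℓ : ℕ} (hℓ : ℓ ≤ h) : PFix (τ ℓ) ℓ :=
  fun j hj => hτ ℓ j hℓ hj

lemma sigma_pfix' (hσ : IsNonInteractingSwap h I σ) (ℓ : ℕ) : PFix ((σ ℓ)⁻¹) ℓ :=
  (sigma_pfix hσ ℓ).inv

/-- The core combinatorial identity: `σ⋆ (σ̄_{ℓ-1} ω (σ_ℓ u)) = σ⋆ (ω u)`. -/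
lemma core (hσ : IsNonInteractingSwap h I σ) {ℓ : ℕ} (u : List Bool)
    (hu : u.length = ℓ) (h1 : 1 ≤ ℓ) :
    sigmaStar I (permList ((σ (ℓ - 1))⁻¹) ((permList (σ ℓ) u).dropLast)) =
      sigmaStar I u.dropLast := by
  have hlen : ((permList (σ ℓ) u).dropLast).length = ℓ - 1 := by simp [hu]
  have entry : ∀ j, j < ℓ - 1 → σ (ℓ - 1) j < ℓ - 1 →
      (permList ((σ (ℓ-1))⁻¹) ((permList (σ ℓ) u).dropLast)).getD j default
        = u.getD (σ ℓ (σ (ℓ - 1) j)) default := by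
    intro j hj hσj
    rw [permList_getD _ _ (by omega : j < ((permList (σ ℓ) u).dropLast).length)]
    rw [sigma_inv_symm hσ]
    rw [getD_dropLast _ _ (by simp [hu]; omega)]
    rw [permList_getD _ _ (by simp [hu]; omega)]
    rw [sigma_symm hσ]
  by_cases hB : 2 ≤ ℓ ∧ (ℓ - 2) ∈ I
  · -- starred case
    obtain ⟨hl2, hBI⟩ := hB
    have hlenL : (permList ((σ (ℓ-1))⁻¹) ((permList (σ ℓ) u).dropLast)).length = ℓ - 1 := by
      simp [hu]
    have hlenR : (u.dropLast).length = ℓ - 1 := by simp [hu]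
    unfold sigmaStar
    rw [if_pos ⟨by rw [← List.length_pos_iff, hlenL]; omega, by rw [hlenL]; exact (by
      have : ℓ - 1 - 1 = ℓ - 2 := by omega
      rw [this]; exact hBI)⟩,
      if_pos ⟨by rw [← List.length_pos_iff, hlenR]; omega, by rw [hlenR]; exact (by
      have : ℓ - 1 - 1 = ℓ - 2 := by omega
      rw [this]; exact hBI)⟩]
    congr 2
    apply List.ext_getElem (by simp [hlenL, hlenR])
    intro j hj1 hj2
    have hjlt : j < ℓ - 2 := by simp [hlenL] at hj1; omega
    rw [List.getElem_dropLast, List.getElem_dropLast]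
    rw [← List.getD_eq_getElem _ default, ← List.getD_eq_getElem _ default]
    rw [entry j (by omega) (by have := sigma_lt_B hσ hBI hl2 (j := j) (by omega); omega)]
    have hk : σ (ℓ - 1) j + 3 ≤ ℓ := sigma_lt_B hσ hBI hl2 (by omega)
    rw [sigma_agree_B hσ hBI hl2 hk, sigma_invol hσ]
    rw [getD_dropLast _ _ (by omega)]
  · -- unstarred case: the two lists are equal
    have hA : ℓ < 2 ∨ (ℓ - 2) ∉ I := by
      by_cases h2 : 2 ≤ ℓ
      · exact Or.inr fun hI => hB ⟨h2, hI⟩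
      · exact Or.inl (by omega)
    have : permList ((σ (ℓ-1))⁻¹) ((permList (σ ℓ) u).dropLast) = u.dropLast := by
      apply List.ext_getElem (by simp [hu])
      intro j hj1 hj2
      have hjlt : j < ℓ - 1 := by simpa [hu] using hj2
      rw [← List.getD_eq_getElem _ default, ← List.getD_eq_getElem _ default]
      rw [entry j hjlt ((sigma_pfix hσ (ℓ-1)).lt hjlt)]
      rw [sigma_agree_A hσ hA, sigma_invol hσ]
      rw [getD_dropLast _ _ (by omega)]
    rw [this]

lemma key2 (hτ : IsLabel h τ) (x : List Bool) (hx1 : 1 ≤ x.length) (hx2 : x.length ≤ h) :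
    starLabel I τ (parentStr τ x) = sParent I τ (starLabel I τ x) := by
  set ℓ := x.length with hℓ
  have hpf : PFix (τ ℓ) ℓ := label_pfix hτ hx2
  have hpf' : PFix (τ (ℓ-1)) (ℓ-1) := label_pfix hτ (by omega)
  unfold starLabel sParent parentStr
  simp only [permList_length, List.length_dropLast, sigmaStar_length, starLabel_length, ← hℓ]
  congr 1
  rw [permList_cancel_left (l := (permList (τ ℓ) x).dropLast)
    (by rw [List.length_dropLast, permList_length, ← hℓ]; exact hpf')]
  rw [permList_cancel_left (l := sigmaStar I (permList (τ ℓ) x))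
    (by rw [sigmaStar_length, permList_length, ← hℓ]; exact hpf)]
  rw [plainDrop_sigmaStar]

lemma key1 (hσ : IsNonInteractingSwap h I σ) (hτ : IsLabel h τ) (x : List Bool)
    (hx1 : 1 ≤ x.length) (hx2 : x.length ≤ h) :
    starLabel I τ (parentStr (fun ℓ => σ ℓ * τ ℓ) x) = sParent I τ (starLabel I τ x) := by
  set ℓ := x.length with hℓ
  have hpfτ : PFix (τ ℓ) ℓ := label_pfix hτ hx2
  have hpfτ' : PFix (τ (ℓ-1)) (ℓ-1) := label_pfix hτ (by omega)
  have hpfσ : PFix (σ ℓ) ℓ := sigma_pfix hσ ℓ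
  have hpfσ' : PFix (σ (ℓ-1)) (ℓ-1) := sigma_pfix hσ (ℓ-1)
  unfold starLabel sParent parentStr
  simp only [permList_length, List.length_dropLast, sigmaStar_length, starLabel_length, ← hℓ]
  -- split the product permutation
  have hsplit : permList (σ ℓ * τ ℓ) x = permList (σ ℓ) (permList (τ ℓ) x) :=
    (permList_comp (fun j hj => hpfσ.symm.lt (by omega))).symm
  have hsplitinv : ∀ l : List Bool, l.length = ℓ - 1 →
      permList ((σ (ℓ-1) * τ (ℓ-1))⁻¹) l = permList ((τ (ℓ-1))⁻¹) (permList ((σ (ℓ-1))⁻¹) l) := by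
    intro l hl
    rw [permList_comp (fun j hj => by
      have heq : ((τ (ℓ-1))⁻¹).symm j = τ (ℓ-1) j := rfl
      rw [heq]
      rw [hl] at hj ⊢
      exact hpfτ'.lt hj), mul_inv_rev]
  rw [hsplit, hsplitinv _ (by simp [← hℓ])]
  congr 1
  rw [permList_cancel_left (l := permList ((σ (ℓ-1))⁻¹) ((permList (σ ℓ) (permList (τ ℓ) x)).dropLast))
    (by rw [permList_length, List.length_dropLast, permList_length, permList_length, ← hℓ]
        exact hpfτ')]
  rw [permList_cancel_left (l := sigmaStar I (permList (τ ℓ) x))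
    (by rw [sigmaStar_length, permList_length, ← hℓ]; exact hpfτ)]
  rw [plainDrop_sigmaStar]
  exact core hσ (permList (τ ℓ) x) (by simp [← hℓ]) (by omega)

end CoreKey
section Inst
variable {h : ℕ} {I : Finset ℕ} {σ τ : ℕ → Equiv.Perm ℕ}

lemma isStarStr_nil : IsStarStr I [] := by
  constructor
  · intro i hi; simp at hi
  · intro hne; simp at hne

/-- Root vertex of a binary tree. -/
def rootT (h : ℕ) : TreeV h := ⟨[], by simp⟩

/-- Inclusion of tree edges into tree vertices. -/
def ιT (h : ℕ) : TreeE h → TreeV h := fun e => ⟨e.1, e.2.2⟩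

/-- Parent map of a binary tree. -/
def pT (h : ℕ) (υ : ℕ → Equiv.Perm ℕ) : TreeE h → TreeV h :=
  fun e => ⟨parentStr υ e.1, by rw [parentStr_length]; omega⟩

lemma treeMat_eq_forest (υ : ℕ → Equiv.Perm ℕ) :
    treeMat h υ = forestMat (ιT h) (pT h υ) := by
  funext v e
  unfold treeMat forestMat ιT pT
  refine if_congr ?_ rfl rfl
  rw [Subtype.ext_iff, Subtype.ext_iff]

lemma ιT_inj : Function.Injective (ιT h) := by
  intro a b hab
  have : (ιT h a).1 = (ιT h b).1 := congrArg Subtype.val hab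
  exact Subtype.ext this

lemma ιT_ne_root : ∀ e : TreeE h, ιT h e ≠ rootT h := by
  intro e he
  have h1 : e.1 = [] := congrArg Subtype.val he
  have h2 := e.2.1
  rw [h1] at h2
  simp at h2

lemma ιT_surj : ∀ v : TreeV h, v ≠ rootT h → ∃ e : TreeE h, ιT h e = v := by
  intro v hv
  have hne : v.1 ≠ [] := fun hnil => hv (Subtype.ext hnil)
  have : 1 ≤ v.1.length := List.length_pos_iff.mpr hne
  exact ⟨⟨v.1, this, v.2⟩, rfl⟩

lemma pT_depth (υ : ℕ → Equiv.Perm ℕ) :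
    ∀ e : TreeE h, (fun v : TreeV h => v.1.length) (pT h υ e) <
      (fun v : TreeV h => v.1.length) (ιT h e) := by
  intro e
  simp only [pT, ιT, parentStr_length]
  have := e.2.1
  omega

/-- Root vertex of the interpolation complex. -/
def rootS (h : ℕ) (I : Finset ℕ) (τ : ℕ → Equiv.Perm ℕ) : SV h I τ :=
  ⟨[], by simp, by simpa using isStarStr_nil⟩

/-- Inclusion of `S`-edges into `S`-vertices. -/
def ιS (h : ℕ) (I : Finset ℕ) (τ : ℕ → Equiv.Perm ℕ) : SE h I τ → SV h I τ :=
  fun e => ⟨e.1, e.2.2.1, e.2.2.2⟩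

lemma sParent_isStar (hτ : IsLabel h τ) (y : List (Option Bool))
    (hy1 : 1 ≤ y.length) (hy2 : y.length ≤ h) :
    IsStarStr I (permList (τ ((sParent I τ y).length)) (sParent I τ y)) := by
  rw [sParent_length]
  unfold sParent
  rw [permList_cancel_left (by
    rw [sigmaStar_length, plainDrop_length, permList_length]
    exact label_pfix hτ (by omega))]
  exact isStarStr_sigmaStar I _

/-- Parent map of the interpolation complex. -/
def pS (h : ℕ) (I : Finset ℕ) (τ : ℕ → Equiv.Perm ℕ) (hτ : IsLabel h τ) :
    SE h I τ → SV h I τ :=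
  fun e => ⟨sParent I τ e.1, by rw [sParent_length]; omega,
    sParent_isStar hτ e.1 e.2.1 e.2.2.1⟩

lemma sMat_eq_forest (hτ : IsLabel h τ) :
    sMat h I τ = forestMat (ιS h I τ) (pS h I τ hτ) := by
  funext v e
  unfold sMat forestMat ιS pS
  refine if_congr ?_ rfl rfl
  rw [Subtype.ext_iff, Subtype.ext_iff]

lemma ιS_inj : Function.Injective (ιS h I τ) := by
  intro a b hab
  have : (ιS h I τ a).1 = (ιS h I τ b).1 := congrArg Subtype.val hab
  exact Subtype.ext this

lemma ιS_ne_root : ∀ e : SE h I τ, ιS h I τ e ≠ rootS h I τ := by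
  intro e he
  have h1 : e.1 = [] := congrArg Subtype.val he
  have h2 := e.2.1
  rw [h1] at h2
  simp at h2

lemma ιS_surj : ∀ v : SV h I τ, v ≠ rootS h I τ → ∃ e : SE h I τ, ιS h I τ e = v := by
  intro v hv
  have hne : v.1 ≠ [] := fun hnil => hv (Subtype.ext hnil)
  have : 1 ≤ v.1.length := List.length_pos_iff.mpr hne
  exact ⟨⟨v.1, this, v.2.1, v.2.2⟩, rfl⟩

lemma pS_depth (hτ : IsLabel h τ) :
    ∀ e : SE h I τ, (fun v : SV h I τ => v.1.length) (pS h I τ hτ e) <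
      (fun v : SV h I τ => v.1.length) (ιS h I τ e) := by
  intro e
  simp only [pS, ιS, sParent_length]
  have := e.2.1
  omega

lemma starLabel_isStar (hτ : IsLabel h τ) (x : List Bool) (hx : x.length ≤ h) :
    IsStarStr I (permList (τ ((starLabel I τ x).length)) (starLabel I τ x)) := by
  rw [starLabel_length]
  unfold starLabel
  rw [permList_cancel_left (by
    rw [sigmaStar_length, permList_length]
    exact label_pfix hτ hx)]
  exact isStarStr_sigmaStar I _

/-- The `S`-vertex with label `starLabel x`. -/
def SLV (hτ : IsLabel h τ) (x : List Bool) (hx : x.length ≤ h) : SV h I τ :=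
  ⟨starLabel I τ x, by simpa using hx, starLabel_isStar hτ x hx⟩

/-- The `S`-edge with label `starLabel x`. -/
def SLE (hτ : IsLabel h τ) (x : List Bool) (hx1 : 1 ≤ x.length) (hx2 : x.length ≤ h) :
    SE h I τ :=
  ⟨starLabel I τ x, by simpa using hx1, by simpa using hx2, starLabel_isStar hτ x hx2⟩

end Inst
section GLemmas
set_option maxHeartbeats 2000000
variable {h : ℕ} {I : Finset ℕ} {σ τ : ℕ → Equiv.Perm ℕ}

lemma g0_ll (w v : TreeV h) : g0 h I τ (Sum.inl w) (Sum.inl v) = if w = v then 1 else 0 := rfl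
lemma g0_lr (w : TreeV h) (v : TreeV h) : g0 h I τ (Sum.inl w) (Sum.inr v) = 0 := rfl
lemma g0_sl (y : SV h I τ) (v : TreeV h) :
    g0 h I τ (Sum.inr (Sum.inl y)) (Sum.inl v) = if y.1 = starLabel I τ v.1 then 1 else 0 := rfl
lemma g0_sr (y : SV h I τ) (v : TreeV h) :
    g0 h I τ (Sum.inr (Sum.inl y)) (Sum.inr v) = if y.1 = starLabel I τ v.1 then 1 else 0 := rfl
lemma g0_rl (w v : TreeV h) : g0 h I τ (Sum.inr (Sum.inr w)) (Sum.inl v) = 0 := rfl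
lemma g0_rr (w v : TreeV h) :
    g0 h I τ (Sum.inr (Sum.inr w)) (Sum.inr v) = if w = v then 1 else 0 := rfl

lemma g1_ll (w v : TreeE h) : g1 h I τ (Sum.inl w) (Sum.inl v) = if w = v then 1 else 0 := rfl
lemma g1_lr (w : TreeE h) (v : TreeE h) : g1 h I τ (Sum.inl w) (Sum.inr v) = 0 := rfl
lemma g1_sl (y : SE h I τ) (v : TreeE h) :
    g1 h I τ (Sum.inr (Sum.inl y)) (Sum.inl v) = if y.1 = starLabel I τ v.1 then 1 else 0 := rfl
lemma g1_sr (y : SE h I τ) (v : TreeE h) :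
    g1 h I τ (Sum.inr (Sum.inl y)) (Sum.inr v) = if y.1 = starLabel I τ v.1 then 1 else 0 := rfl
lemma g1_rl (w v : TreeE h) : g1 h I τ (Sum.inr (Sum.inr w)) (Sum.inl v) = 0 := rfl
lemma g1_rr (w v : TreeE h) :
    g1 h I τ (Sum.inr (Sum.inr w)) (Sum.inr v) = if w = v then 1 else 0 := rfl

lemma dA_ll (σ) (v : TreeV h) (x : TreeE h) :
    dA h σ τ (Sum.inl v) (Sum.inl x) = treeMat h (fun ℓ => σ ℓ * τ ℓ) v x := rfl
lemma dA_lr (σ) (v : TreeV h) (x : TreeE h) : dA h σ τ (Sum.inl v) (Sum.inr x) = 0 := rfl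
lemma dA_rl (σ) (v : TreeV h) (x : TreeE h) : dA h σ τ (Sum.inr v) (Sum.inl x) = 0 := rfl
lemma dA_rr (σ) (v : TreeV h) (x : TreeE h) :
    dA h σ τ (Sum.inr v) (Sum.inr x) = treeMat h τ v x := rfl

lemma dB_11 (v : TreeV h) (x : TreeE h) :
    dB h I σ τ (Sum.inl v) (Sum.inl x) = treeMat h (fun ℓ => σ ℓ * τ ℓ) v x := rfl
lemma dB_12 (v : TreeV h) (y : SE h I τ) : dB h I σ τ (Sum.inl v) (Sum.inr (Sum.inl y)) = 0 := rfl
lemma dB_13 (v : TreeV h) (x : TreeE h) : dB h I σ τ (Sum.inl v) (Sum.inr (Sum.inr x)) = 0 := rfl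
lemma dB_21 (y : SV h I τ) (x : TreeE h) : dB h I σ τ (Sum.inr (Sum.inl y)) (Sum.inl x) = 0 := rfl
lemma dB_22 (y : SV h I τ) (z : SE h I τ) :
    dB h I σ τ (Sum.inr (Sum.inl y)) (Sum.inr (Sum.inl z)) = sMat h I τ y z := rfl
lemma dB_23 (y : SV h I τ) (x : TreeE h) :
    dB h I σ τ (Sum.inr (Sum.inl y)) (Sum.inr (Sum.inr x)) = 0 := rfl
lemma dB_31 (v : TreeV h) (x : TreeE h) : dB h I σ τ (Sum.inr (Sum.inr v)) (Sum.inl x) = 0 := rfl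
lemma dB_32 (v : TreeV h) (y : SE h I τ) :
    dB h I σ τ (Sum.inr (Sum.inr v)) (Sum.inr (Sum.inl y)) = 0 := rfl
lemma dB_33 (v : TreeV h) (x : TreeE h) :
    dB h I σ τ (Sum.inr (Sum.inr v)) (Sum.inr (Sum.inr x)) = treeMat h τ v x := rfl

lemma sum_mul_delta {β : Type*} [Fintype β] [DecidableEq β] (f : β → F2) (b : β) :
    ∑ a, f a * (if a = b then (1 : F2) else 0) = f b := by
  simp [mul_ite]

lemma sum_delta_mul {β : Type*} [Fintype β] [DecidableEq β] (f : β → F2) (b : β) :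
    ∑ a, (if b = a then (1 : F2) else 0) * f a = f b := by
  simp [ite_mul]

lemma treeMat_split (υ : ℕ → Equiv.Perm ℕ) (v : TreeV h) (x : TreeE h) :
    treeMat h υ v x = (if v = ιT h x then (1 : F2) else 0) + (if v = pT h υ x then 1 else 0) := by
  rw [treeMat_eq_forest]
  unfold forestMat
  apply ite_or_add
  rintro ⟨h1, h2⟩
  have := congrArg (fun v : TreeV h => v.1.length) (h1 ▸ h2 : ιT h x = pT h υ x)
  simp only [ιT, pT, parentStr_length] at this
  have := x.2.1
  omega

lemma sMat_split (hτ : IsLabel h τ) (v : SV h I τ) (x : SE h I τ) :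
    sMat h I τ v x = (if v = ιS h I τ x then (1 : F2) else 0) +
      (if v = pS h I τ hτ x then 1 else 0) := by
  rw [sMat_eq_forest hτ]
  unfold forestMat
  apply ite_or_add
  rintro ⟨h1, h2⟩
  have := congrArg (fun v : SV h I τ => v.1.length) (h1 ▸ h2 : ιS h I τ x = pS h I τ hτ x)
  simp only [ιS, pS, sParent_length] at this
  have := x.2.1
  omega

lemma delta_SLE (hτ : IsLabel h τ) (x : List Bool) (hx1 : 1 ≤ x.length) (hx2 : x.length ≤ h)
    (y : SE h I τ) :
    (if y.1 = starLabel I τ x then (1 : F2) else 0) =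
      if y = SLE hτ x hx1 hx2 then 1 else 0 := by
  refine if_congr ?_ rfl rfl
  rw [Subtype.ext_iff]
  rfl

lemma delta_SLV (hτ : IsLabel h τ) (x : List Bool) (hx : x.length ≤ h) (y : SV h I τ) :
    (if y.1 = starLabel I τ x then (1 : F2) else 0) =
      if y = SLV hτ x hx then 1 else 0 := by
  refine if_congr ?_ rfl rfl
  rw [Subtype.ext_iff]
  rfl

lemma stau_label (hσ : IsNonInteractingSwap h I σ) (hτ : IsLabel h τ) :
    IsLabel h (fun ℓ => σ ℓ * τ ℓ) := by
  intro ℓ j hℓ hj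
  simp only [Equiv.Perm.mul_apply]
  rw [hτ ℓ j hℓ hj]
  exact sigma_pfix hσ ℓ j hj

theorem chain_map (h : ℕ) (I : Finset ℕ) (σ τ : ℕ → Equiv.Perm ℕ)
    (hσ : IsNonInteractingSwap h I σ) (hτ : IsLabel h τ) :
    g0 h I τ * dA h σ τ = dB h I σ τ * g1 h I τ := by
  ext vb ea
  rw [Matrix.mul_apply, Matrix.mul_apply, Fintype.sum_sum_type, Fintype.sum_sum_type,
    Fintype.sum_sum_type]
  rcases ea with x | x
  · rcases vb with w | yb | w
    · simp only [g0_ll, g0_lr, g1_ll, g1_sl, g1_rl, dA_ll, dA_rl, dB_11, dB_12, dB_13,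
        zero_mul, mul_zero, Finset.sum_const_zero, add_zero, zero_add]
      rw [sum_delta_mul (fun v => treeMat h (fun ℓ => σ ℓ * τ ℓ) v x) w,
        sum_mul_delta (fun e => treeMat h (fun ℓ => σ ℓ * τ ℓ) w e) x]
    · simp only [g0_sl, g0_sr, g1_ll, g1_sl, g1_rl, dA_ll, dA_rl, dB_21, dB_22, dB_23,
        zero_mul, mul_zero, Finset.sum_const_zero, add_zero, zero_add]
      rw [Finset.sum_congr rfl (fun v _ => by rw [treeMat_split (fun ℓ => σ ℓ * τ ℓ) v x])]
      simp only [mul_add, Finset.sum_add_distrib]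
      rw [sum_mul_delta (fun v => if yb.1 = starLabel I τ v.1 then (1:F2) else 0) (ιT h x),
        sum_mul_delta (fun v => if yb.1 = starLabel I τ v.1 then (1:F2) else 0)
          (pT h (fun ℓ => σ ℓ * τ ℓ) x)]
      rw [Finset.sum_congr rfl (fun y _ => by rw [delta_SLE hτ x.1 x.2.1 x.2.2 y])]
      rw [sum_mul_delta (fun y => sMat h I τ yb y) (SLE hτ x.1 x.2.1 x.2.2)]
      rw [sMat_split hτ]
      congr 1
      · refine if_congr ?_ rfl rfl
        rw [Subtype.ext_iff]
        rfl
      · refine if_congr ?_ rfl rfl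
        rw [Subtype.ext_iff]
        show yb.1 = starLabel I τ (parentStr (fun ℓ => σ ℓ * τ ℓ) x.1) ↔
          yb.1 = sParent I τ (starLabel I τ x.1)
        rw [key1 hσ hτ x.1 x.2.1 x.2.2]
    · simp only [g0_rl, g0_rr, g1_ll, g1_sl, g1_rl, dA_ll, dA_rl, dB_31, dB_32, dB_33,
        zero_mul, mul_zero, Finset.sum_const_zero, add_zero, zero_add]
  · rcases vb with w | yb | w
    · simp only [g0_ll, g0_lr, g1_lr, g1_sr, g1_rr, dA_lr, dA_rr, dB_11, dB_12, dB_13,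
        zero_mul, mul_zero, Finset.sum_const_zero, add_zero, zero_add]
    · simp only [g0_sl, g0_sr, g1_lr, g1_sr, g1_rr, dA_lr, dA_rr, dB_21, dB_22, dB_23,
        zero_mul, mul_zero, Finset.sum_const_zero, add_zero, zero_add]
      rw [Finset.sum_congr rfl (fun v _ => by rw [treeMat_split τ v x])]
      simp only [mul_add, Finset.sum_add_distrib]
      rw [sum_mul_delta (fun v => if yb.1 = starLabel I τ v.1 then (1:F2) else 0) (ιT h x),
        sum_mul_delta (fun v => if yb.1 = starLabel I τ v.1 then (1:F2) else 0) (pT h τ x)]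
      rw [Finset.sum_congr rfl (fun y _ => by rw [delta_SLE hτ x.1 x.2.1 x.2.2 y])]
      rw [sum_mul_delta (fun y => sMat h I τ yb y) (SLE hτ x.1 x.2.1 x.2.2)]
      rw [sMat_split hτ]
      congr 1
      · refine if_congr ?_ rfl rfl
        rw [Subtype.ext_iff]
        rfl
      · refine if_congr ?_ rfl rfl
        rw [Subtype.ext_iff]
        show yb.1 = starLabel I τ (parentStr τ x.1) ↔
          yb.1 = sParent I τ (starLabel I τ x.1)
        rw [key2 hτ x.1 x.2.1 x.2.2]
    · simp only [g0_rl, g0_rr, g1_lr, g1_sr, g1_rr, dA_lr, dA_rr, dB_31, dB_32, dB_33,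
        zero_mul, mul_zero, Finset.sum_const_zero, add_zero, zero_add]
      rw [sum_delta_mul (fun v => treeMat h τ v x) w,
        sum_mul_delta (fun e => treeMat h τ w e) x]

end GLemmas
section Homology
set_option maxHeartbeats 2000000
variable {h : ℕ} {I : Finset ℕ} {σ τ : ℕ → Equiv.Perm ℕ}

lemma F2_add_eq_zero : ∀ a b : F2, a + b = 0 → a = b := by decide

lemma tree_ker (υ : ℕ → Equiv.Perm ℕ) (x : TreeE h → F2)
    (hx : (treeMat h υ).mulVec x = 0) : x = 0 := by
  have hker := forest_ker (V := TreeV h) (d := fun v => v.1.length) ιT_inj (pT_depth υ)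
  rw [LinearMap.ker_eq_bot'] at hker
  exact hker x (by rw [Matrix.mulVecLin_apply, ← treeMat_eq_forest]; exact hx)

lemma tree_pre (υ : ℕ → Equiv.Perm ℕ) (x : TreeV h → F2) (hx : ∑ v, x v = 0) :
    ∃ y, (treeMat h υ).mulVec y = x := by
  obtain ⟨y, hy⟩ := forest_exists_preimage (d := fun v : TreeV h => v.1.length)
    ιT_inj (pT_depth υ) ιT_ne_root ιT_surj x hx
  exact ⟨y, by rw [treeMat_eq_forest]; exact hy⟩

lemma tree_ne (υ : ℕ → Equiv.Perm ℕ) : ∀ e : TreeE h, ιT h e ≠ pT h υ e := by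
  intro e he
  have := congrArg (fun v : TreeV h => v.1.length) he
  simp only [ιT, pT, parentStr_length] at this
  have := e.2.1
  omega

lemma tree_sum (υ : ℕ → Equiv.Perm ℕ) (y : TreeE h → F2) :
    ∑ v, (treeMat h υ).mulVec y v = 0 := by
  rw [treeMat_eq_forest]
  exact forest_sum_mulVec (tree_ne υ) y

lemma s_ker (hτ : IsLabel h τ) (x : SE h I τ → F2)
    (hx : (sMat h I τ).mulVec x = 0) : x = 0 := by
  have hker := forest_ker (V := SV h I τ) (d := fun v => v.1.length) ιS_inj (pS_depth hτ)
  rw [LinearMap.ker_eq_bot'] at hker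
  exact hker x (by rw [Matrix.mulVecLin_apply, ← sMat_eq_forest hτ]; exact hx)

lemma s_pre (hτ : IsLabel h τ) (x : SV h I τ → F2) (hx : ∑ v, x v = 0) :
    ∃ y, (sMat h I τ).mulVec y = x := by
  obtain ⟨y, hy⟩ := forest_exists_preimage (d := fun v : SV h I τ => v.1.length)
    ιS_inj (pS_depth hτ) ιS_ne_root ιS_surj x hx
  exact ⟨y, by rw [sMat_eq_forest hτ]; exact hy⟩

lemma s_ne (hτ : IsLabel h τ) : ∀ e : SE h I τ, ιS h I τ e ≠ pS h I τ hτ e := by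
  intro e he
  have := congrArg (fun v : SV h I τ => v.1.length) he
  simp only [ιS, pS, sParent_length] at this
  have := e.2.1
  omega

lemma s_sum (hτ : IsLabel h τ) (y : SE h I τ → F2) :
    ∑ v, (sMat h I τ).mulVec y v = 0 := by
  rw [sMat_eq_forest hτ]
  exact forest_sum_mulVec (s_ne hτ) y

lemma mulVec_dA_inl (x : TreeE h ⊕ TreeE h → F2) (v : TreeV h) :
    (dA h σ τ).mulVec x (Sum.inl v) =
      (treeMat h fun ℓ => σ ℓ * τ ℓ).mulVec (fun e => x (Sum.inl e)) v := by
  simp only [Matrix.mulVec, dotProduct, Fintype.sum_sum_type, dA_ll, dA_lr,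
    zero_mul, Finset.sum_const_zero, add_zero]

lemma mulVec_dA_inr (x : TreeE h ⊕ TreeE h → F2) (v : TreeV h) :
    (dA h σ τ).mulVec x (Sum.inr v) =
      (treeMat h τ).mulVec (fun e => x (Sum.inr e)) v := by
  simp only [Matrix.mulVec, dotProduct, Fintype.sum_sum_type, dA_rl, dA_rr,
    zero_mul, Finset.sum_const_zero, zero_add]

lemma mulVec_dB_1 (x : TreeE h ⊕ (SE h I τ ⊕ TreeE h) → F2) (v : TreeV h) :
    (dB h I σ τ).mulVec x (Sum.inl v) =
      (treeMat h fun ℓ => σ ℓ * τ ℓ).mulVec (fun e => x (Sum.inl e)) v := by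
  simp only [Matrix.mulVec, dotProduct, Fintype.sum_sum_type, dB_11, dB_12, dB_13,
    zero_mul, Finset.sum_const_zero, add_zero]

lemma mulVec_dB_2 (x : TreeE h ⊕ (SE h I τ ⊕ TreeE h) → F2) (y : SV h I τ) :
    (dB h I σ τ).mulVec x (Sum.inr (Sum.inl y)) =
      (sMat h I τ).mulVec (fun e => x (Sum.inr (Sum.inl e))) y := by
  simp only [Matrix.mulVec, dotProduct, Fintype.sum_sum_type, dB_21, dB_22, dB_23,
    zero_mul, Finset.sum_const_zero, add_zero, zero_add]

lemma mulVec_dB_3 (x : TreeE h ⊕ (SE h I τ ⊕ TreeE h) → F2) (v : TreeV h) :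
    (dB h I σ τ).mulVec x (Sum.inr (Sum.inr v)) =
      (treeMat h τ).mulVec (fun e => x (Sum.inr (Sum.inr e))) v := by
  simp only [Matrix.mulVec, dotProduct, Fintype.sum_sum_type, dB_31, dB_32, dB_33,
    zero_mul, Finset.sum_const_zero, zero_add]

lemma mulVec_g0_1 (a : TreeV h ⊕ TreeV h → F2) (w : TreeV h) :
    (g0 h I τ).mulVec a (Sum.inl w) = a (Sum.inl w) := by
  simp only [Matrix.mulVec, dotProduct, Fintype.sum_sum_type, g0_ll, g0_lr,
    zero_mul, Finset.sum_const_zero, add_zero]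
  exact sum_delta_mul (fun v => a (Sum.inl v)) w

lemma mulVec_g0_3 (a : TreeV h ⊕ TreeV h → F2) (w : TreeV h) :
    (g0 h I τ).mulVec a (Sum.inr (Sum.inr w)) = a (Sum.inr w) := by
  simp only [Matrix.mulVec, dotProduct, Fintype.sum_sum_type, g0_rl, g0_rr,
    zero_mul, Finset.sum_const_zero, zero_add]
  exact sum_delta_mul (fun v => a (Sum.inr v)) w

lemma mulVec_g0_2 (a : TreeV h ⊕ TreeV h → F2) (y : SV h I τ) :
    (g0 h I τ).mulVec a (Sum.inr (Sum.inl y)) =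
      (∑ v, (if y.1 = starLabel I τ v.1 then (1:F2) else 0) * a (Sum.inl v)) +
      ∑ v, (if y.1 = starLabel I τ v.1 then (1:F2) else 0) * a (Sum.inr v) := by
  simp only [Matrix.mulVec, dotProduct, Fintype.sum_sum_type, g0_sl, g0_sr]

lemma mulVec_g1_1 (a : TreeE h ⊕ TreeE h → F2) (w : TreeE h) :
    (g1 h I τ).mulVec a (Sum.inl w) = a (Sum.inl w) := by
  simp only [Matrix.mulVec, dotProduct, Fintype.sum_sum_type, g1_ll, g1_lr,
    zero_mul, Finset.sum_const_zero, add_zero]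
  exact sum_delta_mul (fun v => a (Sum.inl v)) w

lemma coneD2_mulVec_inl (x : TreeE h ⊕ TreeE h → F2) (va : TreeV h ⊕ TreeV h) :
    (coneD2 h I σ τ).mulVec x (Sum.inl va) = (dA h σ τ).mulVec x va := rfl

lemma coneD2_mulVec_inr (x : TreeE h ⊕ TreeE h → F2)
    (eb : TreeE h ⊕ (SE h I τ ⊕ TreeE h)) :
    (coneD2 h I σ τ).mulVec x (Sum.inr eb) = (g1 h I τ).mulVec x eb := rfl

lemma coneD1_l (v : TreeV h ⊕ (SV h I τ ⊕ TreeV h)) (va : TreeV h ⊕ TreeV h) :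
    coneD1 h I σ τ v (Sum.inl va) = g0 h I τ v va := rfl

lemma coneD1_r (v : TreeV h ⊕ (SV h I τ ⊕ TreeV h))
    (eb : TreeE h ⊕ (SE h I τ ⊕ TreeE h)) :
    coneD1 h I σ τ v (Sum.inr eb) = dB h I σ τ v eb := rfl

lemma coneD1_mulVec (z) (v : TreeV h ⊕ (SV h I τ ⊕ TreeV h)) :
    (coneD1 h I σ τ).mulVec z v =
      (g0 h I τ).mulVec (fun a => z (Sum.inl a)) v +
        (dB h I σ τ).mulVec (fun b => z (Sum.inr b)) v := by
  simp only [Matrix.mulVec, dotProduct, Fintype.sum_sum_type, coneD1_l, coneD1_r]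

theorem H2main (hσ : IsNonInteractingSwap h I σ) (hτ : IsLabel h τ) :
    H2Trivial (coneD2 h I σ τ) := by
  unfold H2Trivial
  rw [LinearMap.ker_eq_bot']
  intro x hx
  rw [Matrix.mulVecLin_apply] at hx
  have hdA : (dA h σ τ).mulVec x = 0 := by
    funext va
    have := congrFun hx (Sum.inl va)
    rwa [coneD2_mulVec_inl] at this
  have h1 : (fun e => x (Sum.inl e)) = (0 : TreeE h → F2) := by
    apply tree_ker (fun ℓ => σ ℓ * τ ℓ)
    funext v
    rw [← mulVec_dA_inl]
    exact congrFun hdA (Sum.inl v)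
  have h2 : (fun e => x (Sum.inr e)) = (0 : TreeE h → F2) := by
    apply tree_ker τ
    funext v
    rw [← mulVec_dA_inr]
    exact congrFun hdA (Sum.inr v)
  funext e
  rcases e with e | e
  · exact congrFun h1 e
  · exact congrFun h2 e

lemma dB_ker (hτ : IsLabel h τ) (x : TreeE h ⊕ (SE h I τ ⊕ TreeE h) → F2)
    (hx : (dB h I σ τ).mulVec x = 0) : x = 0 := by
  have h1 := tree_ker (h := h) (fun ℓ => σ ℓ * τ ℓ) (fun e => x (Sum.inl e)) (by
    funext v; rw [← mulVec_dB_1]; exact congrFun hx (Sum.inl v))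
  have h2 := s_ker hτ (fun e => x (Sum.inr (Sum.inl e))) (by
    funext v; rw [← mulVec_dB_2]; exact congrFun hx (Sum.inr (Sum.inl v)))
  have h3 := tree_ker (h := h) τ (fun e => x (Sum.inr (Sum.inr e))) (by
    funext v; rw [← mulVec_dB_3]; exact congrFun hx (Sum.inr (Sum.inr v)))
  funext e
  rcases e with e | e | e
  · exact congrFun h1 e
  · exact congrFun h2 e
  · exact congrFun h3 e

lemma cone_comp_zero (hσ : IsNonInteractingSwap h I σ) (hτ : IsLabel h τ) :
    coneD1 h I σ τ * coneD2 h I σ τ = 0 := by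
  ext v c
  rw [Matrix.mul_apply, Fintype.sum_sum_type]
  have e1 : ∑ va, coneD1 h I σ τ v (Sum.inl va) * coneD2 h I σ τ (Sum.inl va) c =
      (g0 h I τ * dA h σ τ) v c := by
    rw [Matrix.mul_apply]; rfl
  have e2 : ∑ eb, coneD1 h I σ τ v (Sum.inr eb) * coneD2 h I σ τ (Sum.inr eb) c =
      (dB h I σ τ * g1 h I τ) v c := by
    rw [Matrix.mul_apply]; rfl
  rw [e1, e2, chain_map h I σ τ hσ hτ]
  simp [CharTwo.add_self_eq_zero]

theorem H1main (hσ : IsNonInteractingSwap h I σ) (hτ : IsLabel h τ) :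
    H1Trivial (coneD2 h I σ τ) (coneD1 h I σ τ) := by
  unfold H1Trivial
  apply le_antisymm
  · -- ker ⊆ range
    intro z hz
    rw [LinearMap.mem_ker, Matrix.mulVecLin_apply] at hz
    set a₀ : TreeV h ⊕ TreeV h → F2 := fun va => z (Sum.inl va) with ha₀
    set b₁ : TreeE h ⊕ (SE h I τ ⊕ TreeE h) → F2 := fun eb => z (Sum.inr eb) with hb₁
    have hzv : ∀ v, (g0 h I τ).mulVec a₀ v + (dB h I σ τ).mulVec b₁ v = 0 := by
      intro v
      have := congrFun hz v
      rwa [coneD1_mulVec] at this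
    -- component sums of a₀ vanish
    have hs1 : ∑ w : TreeV h, a₀ (Sum.inl w) = 0 := by
      have : ∑ w : TreeV h, ((g0 h I τ).mulVec a₀ (Sum.inl w) +
          (dB h I σ τ).mulVec b₁ (Sum.inl w)) = 0 := by
        simp [fun w => hzv (Sum.inl w)]
      rw [Finset.sum_add_distrib] at this
      rw [Finset.sum_congr rfl (fun w _ => mulVec_g0_1 a₀ w),
        Finset.sum_congr rfl (fun w _ => mulVec_dB_1 b₁ w), tree_sum, add_zero] at this
      exact this
    have hs3 : ∑ w : TreeV h, a₀ (Sum.inr w) = 0 := by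
      have : ∑ w : TreeV h, ((g0 h I τ).mulVec a₀ (Sum.inr (Sum.inr w)) +
          (dB h I σ τ).mulVec b₁ (Sum.inr (Sum.inr w))) = 0 := by
        simp [fun w => hzv (Sum.inr (Sum.inr w))]
      rw [Finset.sum_add_distrib] at this
      rw [Finset.sum_congr rfl (fun w _ => mulVec_g0_3 a₀ w),
        Finset.sum_congr rfl (fun w _ => mulVec_dB_3 b₁ w), tree_sum, add_zero] at this
      exact this
    obtain ⟨y1, hy1⟩ := tree_pre (h := h) (fun ℓ => σ ℓ * τ ℓ) (fun w => a₀ (Sum.inl w)) hs1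
    obtain ⟨y2, hy2⟩ := tree_pre (h := h) τ (fun w => a₀ (Sum.inr w)) hs3
    set a₁ : TreeE h ⊕ TreeE h → F2 := Sum.elim y1 y2 with ha₁
    have hdA : (dA h σ τ).mulVec a₁ = a₀ := by
      funext va
      rcases va with v | v
      · rw [mulVec_dA_inl]; exact congrFun hy1 v
      · rw [mulVec_dA_inr]; exact congrFun hy2 v
    have hg1 : (g1 h I τ).mulVec a₁ = b₁ := by
      have hw : (dB h I σ τ).mulVec (fun eb => (g1 h I τ).mulVec a₁ eb + b₁ eb) = 0 := by
        have : (dB h I σ τ).mulVec (fun eb => (g1 h I τ).mulVec a₁ eb + b₁ eb) =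
            (dB h I σ τ).mulVec ((g1 h I τ).mulVec a₁) + (dB h I σ τ).mulVec b₁ := by
          rw [← Matrix.mulVec_add]; rfl
        rw [this, Matrix.mulVec_mulVec, ← chain_map h I σ τ hσ hτ,
          ← Matrix.mulVec_mulVec, hdA]
        funext v
        exact hzv v
      have := dB_ker hτ _ hw
      funext eb
      exact F2_add_eq_zero _ _ (congrFun this eb)
    refine ⟨a₁, ?_⟩
    rw [Matrix.mulVecLin_apply]
    funext r
    rcases r with va | eb
    · rw [coneD2_mulVec_inl, hdA]
    · rw [coneD2_mulVec_inr, hg1]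
  · -- range ⊆ ker
    rintro _ ⟨t, rfl⟩
    rw [LinearMap.mem_ker, Matrix.mulVecLin_apply, Matrix.mulVecLin_apply,
      Matrix.mulVec_mulVec, cone_comp_zero hσ hτ]
    simp
end Homology
section H0sec
set_option maxHeartbeats 2000000
variable {h : ℕ} {I : Finset ℕ} {σ τ : ℕ → Equiv.Perm ℕ}

lemma F2_aba : ∀ a b : F2, a + (b + a) = b := by decide

lemma sum_mul_ite {β : Type*} [Fintype β] [DecidableEq β] (f : β → F2) (b : β) (c : F2) :
    ∑ a, f a * (if a = b then c else 0) = f b * c := by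
  rw [Finset.sum_congr rfl (fun a _ => by rw [mul_ite, mul_zero]),
    Finset.sum_ite_eq' Finset.univ b (fun a => f a * c)]
  simp

lemma sum_delta_S (hτ : IsLabel h τ) (v : TreeV h) :
    ∑ y : SV h I τ, (if y.1 = starLabel I τ v.1 then (1:F2) else 0) = 1 := by
  rw [Finset.sum_congr rfl (fun y _ => delta_SLV hτ v.1 v.2 y)]
  simp [Finset.sum_ite_eq']

theorem H0main (hh : 1 ≤ h) (hσ : IsNonInteractingSwap h I σ) (hτ : IsLabel h τ) :
    H0IsF2 (coneD1 h I σ τ) := by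
  have hrange : LinearMap.range (coneD1 h I σ τ).mulVecLin =
      LinearMap.ker (sumF (TreeV h ⊕ (SV h I τ ⊕ TreeV h))) := by
    apply le_antisymm
    · rintro _ ⟨z, rfl⟩
      rw [LinearMap.mem_ker]
      show ∑ v, (coneD1 h I σ τ).mulVecLin z v = 0
      rw [Finset.sum_congr rfl (fun v _ => by
        rw [Matrix.mulVecLin_apply, coneD1_mulVec z v])]
      rw [Finset.sum_add_distrib]
      have hdB : ∑ v, (dB h I σ τ).mulVec (fun b => z (Sum.inr b)) v = 0 := by
        rw [Fintype.sum_sum_type, Fintype.sum_sum_type]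
        rw [Finset.sum_congr rfl (fun v _ => mulVec_dB_1 _ v),
          Finset.sum_congr rfl (fun v _ => mulVec_dB_2 _ v),
          Finset.sum_congr rfl (fun v _ => mulVec_dB_3 _ v),
          tree_sum, s_sum hτ, tree_sum]
        simp
      have hmid : ∀ c : TreeV h → F2, ∑ y : SV h I τ, ∑ v,
          (if y.1 = starLabel I τ v.1 then (1:F2) else 0) * c v = ∑ v, c v := by
        intro c
        rw [Finset.sum_comm]
        refine Finset.sum_congr rfl (fun v _ => ?_)
        rw [← Finset.sum_mul, sum_delta_S hτ v, one_mul]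
      have hg0 : ∑ v, (g0 h I τ).mulVec (fun a => z (Sum.inl a)) v = 0 := by
        rw [Fintype.sum_sum_type, Fintype.sum_sum_type]
        have e2 : ∑ y : SV h I τ, (g0 h I τ).mulVec (fun a => z (Sum.inl a))
            (Sum.inr (Sum.inl y)) =
            (∑ v, z (Sum.inl (Sum.inl v))) + ∑ v, z (Sum.inl (Sum.inr v)) := by
          rw [Finset.sum_congr rfl (fun y _ => mulVec_g0_2 _ y), Finset.sum_add_distrib,
            hmid, hmid]
        rw [Finset.sum_congr rfl (fun v _ => mulVec_g0_1 _ v), e2,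
          Finset.sum_congr rfl (fun v _ => mulVec_g0_3 _ v)]
        have hf : ∀ a b : F2, a + (a + b + b) = 0 := by decide
        exact hf _ _
      rw [hdB, hg0, add_zero]
    · intro x hx
      rw [LinearMap.mem_ker] at hx
      have hxsum : ∑ v, x v = 0 := hx
      rw [Fintype.sum_sum_type, Fintype.sum_sum_type] at hxsum
      set s1 := ∑ w : TreeV h, x (Sum.inl w) with hs1
      set s2 := ∑ y : SV h I τ, x (Sum.inr (Sum.inl y)) with hs2
      set s3 := ∑ w : TreeV h, x (Sum.inr (Sum.inr w)) with hs3
      set a₀ : TreeV h ⊕ TreeV h → F2 := Sum.elim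
        (fun v => if v = rootT h then s1 else 0)
        (fun v => if v = rootT h then s3 else 0) with ha₀
      set u := (g0 h I τ).mulVec a₀ with hu
      have hu1 : ∀ w, u (Sum.inl w) = if w = rootT h then s1 else 0 := fun w =>
        mulVec_g0_1 a₀ w
      have hu3 : ∀ w, u (Sum.inr (Sum.inr w)) = if w = rootT h then s3 else 0 := fun w =>
        mulVec_g0_3 a₀ w
      have hroot : (rootS h I τ : SV h I τ).1 = starLabel I τ (rootT h).1 := by
        simp [rootS, rootT]
      have hu2 : ∀ y, u (Sum.inr (Sum.inl y)) =
          if y = rootS h I τ then s1 + s3 else 0 := by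
        intro y
        rw [hu, mulVec_g0_2]
        show (∑ v, (if y.1 = starLabel I τ v.1 then (1:F2) else 0) *
            (if v = rootT h then s1 else 0)) +
          (∑ v, (if y.1 = starLabel I τ v.1 then (1:F2) else 0) *
            (if v = rootT h then s3 else 0)) = _
        rw [sum_mul_ite (fun v => if y.1 = starLabel I τ v.1 then (1:F2) else 0) (rootT h) s1,
          sum_mul_ite (fun v => if y.1 = starLabel I τ v.1 then (1:F2) else 0) (rootT h) s3]
        have hiff : (y.1 = starLabel I τ (rootT h).1) ↔ (y = rootS h I τ) := by
          rw [Subtype.ext_iff, hroot]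
        by_cases hy : y = rootS h I τ
        · rw [if_pos (hiff.mpr hy), if_pos hy, one_mul, one_mul]
        · rw [if_neg (fun hc => hy (hiff.mp hc)), if_neg hy, zero_mul, zero_mul, add_zero]
      -- the corrected vector has vanishing component sums
      have hc1 : ∑ w : TreeV h, (x (Sum.inl w) + u (Sum.inl w)) = 0 := by
        rw [Finset.sum_add_distrib, ← hs1,
          Finset.sum_congr rfl (fun w _ => hu1 w)]
        simp [Finset.sum_ite_eq', CharTwo.add_self_eq_zero]
      have hc2 : ∑ y : SV h I τ, (x (Sum.inr (Sum.inl y)) + u (Sum.inr (Sum.inl y))) = 0 := by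
        rw [Finset.sum_add_distrib, ← hs2,
          Finset.sum_congr rfl (fun y _ => hu2 y)]
        rw [Finset.sum_ite_eq' Finset.univ (rootS h I τ) (fun _ => s1 + s3)]
        simp only [Finset.mem_univ, if_true]
        have : s1 + (s2 + s3) = 0 := hxsum
        have h2 : s2 + (s1 + s3) = 0 := by
          rw [← this]; ring
        exact h2
      have hc3 : ∑ w : TreeV h, (x (Sum.inr (Sum.inr w)) + u (Sum.inr (Sum.inr w))) = 0 := by
        rw [Finset.sum_add_distrib, ← hs3,
          Finset.sum_congr rfl (fun w _ => hu3 w)]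
        simp [Finset.sum_ite_eq', CharTwo.add_self_eq_zero]
      obtain ⟨y1, hy1⟩ := tree_pre (h := h) (fun ℓ => σ ℓ * τ ℓ)
        (fun w => x (Sum.inl w) + u (Sum.inl w)) hc1
      obtain ⟨y2, hy2⟩ := s_pre hτ
        (fun y => x (Sum.inr (Sum.inl y)) + u (Sum.inr (Sum.inl y))) hc2
      obtain ⟨y3, hy3⟩ := tree_pre (h := h) τ
        (fun w => x (Sum.inr (Sum.inr w)) + u (Sum.inr (Sum.inr w))) hc3
      refine ⟨Sum.elim a₀ (Sum.elim y1 (Sum.elim y2 y3)), ?_⟩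
      rw [Matrix.mulVecLin_apply]
      funext v
      rw [coneD1_mulVec]
      have helim : (fun a => Sum.elim a₀ (Sum.elim y1 (Sum.elim y2 y3)) (Sum.inl a)) = a₀ :=
        rfl
      have helim2 : (fun b => Sum.elim a₀ (Sum.elim y1 (Sum.elim y2 y3)) (Sum.inr b)) =
          Sum.elim y1 (Sum.elim y2 y3) := rfl
      rw [helim, helim2, ← hu]
      rcases v with w | y | w
      · rw [mulVec_dB_1]
        have : (fun e => Sum.elim y1 (Sum.elim y2 y3) (Sum.inl e)) = y1 := rfl
        rw [this, hy1]
        show u (Sum.inl w) + (x (Sum.inl w) + u (Sum.inl w)) = x (Sum.inl w)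
        exact F2_aba _ _
      · rw [mulVec_dB_2]
        have : (fun e => Sum.elim y1 (Sum.elim y2 y3) (Sum.inr (Sum.inl e))) = y2 := rfl
        rw [this, hy2]
        show u (Sum.inr (Sum.inl y)) + (x (Sum.inr (Sum.inl y)) + u (Sum.inr (Sum.inl y))) =
          x (Sum.inr (Sum.inl y))
        exact F2_aba _ _
      · rw [mulVec_dB_3]
        have : (fun e => Sum.elim y1 (Sum.elim y2 y3) (Sum.inr (Sum.inr e))) = y3 := rfl
        rw [this, hy3]
        show u (Sum.inr (Sum.inr w)) + (x (Sum.inr (Sum.inr w)) + u (Sum.inr (Sum.inr w))) =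
          x (Sum.inr (Sum.inr w))
        exact F2_aba _ _
  refine ⟨(Submodule.quotEquivOfEq _ _ hrange).trans
    ((sumF (TreeV h ⊕ (SV h I τ ⊕ TreeV h))).quotKerEquivOfSurjective
      (sumF_surjective ⟨Sum.inl (rootT h)⟩))⟩

end H0sec
section WeightHelpers
set_option maxHeartbeats 2000000
variable {h : ℕ} {I : Finset ℕ} {σ τ : ℕ → Equiv.Perm ℕ}

lemma F2_ite_ne {P : Prop} [Decidable P] : ((if P then (1:F2) else 0) ≠ 0) ↔ P := by
  by_cases hP : P <;> simp [hP]

lemma coneD2_l (va : TreeV h ⊕ TreeV h) (c : TreeE h ⊕ TreeE h) :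
    coneD2 h I σ τ (Sum.inl va) c = dA h σ τ va c := rfl

lemma coneD2_r (eb : TreeE h ⊕ (SE h I τ ⊕ TreeE h)) (c : TreeE h ⊕ TreeE h) :
    coneD2 h I σ τ (Sum.inr eb) c = g1 h I τ eb c := rfl

lemma list_ext_last {α : Type*} [Inhabited α] {l l' : List α} (hlen : l.length = l'.length)
    (hd : l.dropLast = l'.dropLast)
    (hl : l.getD (l.length - 1) default = l'.getD (l'.length - 1) default) : l = l' := by
  apply List.ext_getElem hlen
  intro j h1 h2
  rcases Nat.lt_or_ge j (l.length - 1) with hj | hj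
  · have e1 : l.dropLast.getD j default = l'.dropLast.getD j default := by rw [hd]
    rw [getD_dropLast _ _ hj, getD_dropLast _ _ (by omega)] at e1
    rwa [List.getD_eq_getElem _ _ h1, List.getD_eq_getElem _ _ h2] at e1
  · have hj' : j = l.length - 1 := by omega
    subst hj'
    rw [List.getD_eq_getElem _ _ h1] at hl
    rw [List.getD_eq_getElem _ _ (by omega)] at hl
    convert hl using 2
    omega

lemma starStr_dropLast {u : List (Option Bool)} (hu : IsStarStr I u) :
    u.dropLast = (plainDrop u).map some := by
  apply List.ext_getElem (by simp [plainDrop])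
  intro j h1 h2
  have hj : j < u.length - 1 := by simpa using h1
  have hju : j < u.length := by omega
  have hj2 : j < (plainDrop u).length := by simp [plainDrop]; omega
  have hne : u[j]'hju ≠ none := by
    have := hu.1 j (by omega)
    rwa [List.getD_eq_getElem _ _ hju] at this
  have hpj : (plainDrop u)[j]'hj2 = (u[j]'hju).getD false := by
    simp [plainDrop, List.getElem_dropLast]
  obtain ⟨b, hbv⟩ := Option.ne_none_iff_exists'.mp hne
  rw [List.getElem_dropLast, List.getElem_map, hpj, hbv]
  rfl

lemma parent_lastbit_inj (hυ : IsLabel h υ) {x x' : List Bool}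
    (hlen : x.length = x'.length) (h1 : 1 ≤ x.length) (h2 : x.length ≤ h)
    (hp : parentStr υ x = parentStr υ x')
    (hb : (permList (υ x.length) x).getD (x.length - 1) default =
      (permList (υ x'.length) x').getD (x'.length - 1) default) : x = x' := by
  set ℓ := x.length with hℓ
  have hpf : PFix (υ ℓ) ℓ := label_pfix hυ h2
  have hpf' : PFix (υ (ℓ-1)) (ℓ-1) := label_pfix hυ (by omega)
  unfold parentStr at hp
  rw [← hlen] at hp
  have hdrop : (permList (υ ℓ) x).dropLast = (permList (υ ℓ) x').dropLast := by
    apply permList_inj (by simp [← hlen]; omega) (by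
      rw [List.length_dropLast, permList_length, ← hℓ]; exact hpf'.inv) hp
  have huu : permList (υ ℓ) x = permList (υ ℓ) x' := by
    apply list_ext_last (by simp [← hlen]; omega) hdrop
    have g1 : (permList (υ ℓ) x).length = ℓ := by simp [← hℓ]
    have g2 : (permList (υ ℓ) x').length = ℓ := by simp [← hlen]
    rw [g1, g2]
    rw [← hlen] at hb
    exact hb
  exact permList_inj hlen (hℓ ▸ hpf) huu

lemma map_some_inj {l l' : List Bool} (hm : l.map some = l'.map some) : l = l' :=
  List.map_injective_iff.mpr (Option.some_injective Bool) hm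

lemma sigmaStar_inj_lastbit {u u' : List Bool} (hlen : u.length = u'.length)
    (hs : sigmaStar I u = sigmaStar I u')
    (hb : u.getD (u.length - 1) default = u'.getD (u'.length - 1) default) : u = u' := by
  rcases Nat.eq_zero_or_pos u.length with h0 | hpos
  · have h0' : u'.length = 0 := by omega
    rw [List.length_eq_zero_iff.mp h0, List.length_eq_zero_iff.mp h0']
  · have hne : u ≠ [] := by rw [← List.length_pos_iff]; omega
    have hne' : u' ≠ [] := by rw [← List.length_pos_iff]; omega
    unfold sigmaStar at hs
    by_cases hI : (u.length - 1) ∈ I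
    · rw [if_pos ⟨hne, hI⟩, if_pos ⟨hne', by rw [← hlen]; exact hI⟩] at hs
      have hd : u.dropLast = u'.dropLast := by
        apply map_some_inj
        have := congrArg List.dropLast hs
        rwa [List.dropLast_concat, List.dropLast_concat] at this
      exact list_ext_last hlen hd hb
    · rw [if_neg (by rintro ⟨_, hx⟩; exact hI hx),
        if_neg (by rintro ⟨_, hx⟩; rw [← hlen] at hx; exact hI hx)] at hs
      exact map_some_inj hs

lemma starLabel_lastbit_inj (hτ : IsLabel h τ) {x x' : List Bool}
    (hlen : x.length = x'.length) (h2 : x.length ≤ h)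
    (hs : starLabel I τ x = starLabel I τ x')
    (hb : (permList (τ x.length) x).getD (x.length - 1) default =
      (permList (τ x'.length) x').getD (x'.length - 1) default) : x = x' := by
  set ℓ := x.length with hℓ
  have hpf : PFix (τ ℓ) ℓ := label_pfix hτ h2
  unfold starLabel at hs
  rw [← hlen] at hs
  have hss : sigmaStar I (permList (τ ℓ) x) = sigmaStar I (permList (τ ℓ) x') := by
    apply permList_inj (by simp [← hlen]; omega) (by
      rw [sigmaStar_length, permList_length, ← hℓ]; exact hpf.inv) hs
  have := sigmaStar_inj_lastbit (by simp [← hlen]; omega) hss (by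
    have g1 : (permList (τ ℓ) x).length = ℓ := by simp [← hℓ]
    have g2 : (permList (τ ℓ) x').length = ℓ := by simp [← hlen]
    rw [g1, g2]
    rw [← hlen] at hb
    exact hb)
  exact permList_inj hlen (hℓ ▸ hpf) this

/-- Injectivity of `S`-children: a child edge of `y` is determined by its entries at the
last two positions (in iff-of-`some true` form). -/
lemma schild_inj (hτ : IsLabel h τ) {y : List (Option Bool)} {e e' : SE h I τ}
    (hp : sParent I τ e.1 = y) (hp' : sParent I τ e'.1 = y)
    (hlast : ((permList (τ e.1.length) e.1).getD (e.1.length - 1) none = some true) ↔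
      ((permList (τ e'.1.length) e'.1).getD (e'.1.length - 1) none = some true))
    (hsnd : ((permList (τ e.1.length) e.1).getD (e.1.length - 2) none = some true) ↔
      ((permList (τ e'.1.length) e'.1).getD (e'.1.length - 2) none = some true)) :
    e = e' := by
  have hL : e.1.length = e'.1.length := by
    have l1 := congrArg List.length hp
    have l2 := congrArg List.length hp'
    rw [sParent_length] at l1 l2
    have := e.2.1; have := e'.2.1
    omega
  set L := e.1.length with hLdef
  have hL1 : 1 ≤ L := e.2.1
  have hLh : L ≤ h := e.2.2.1
  set u := permList (τ L) e.1 with hu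
  set u' := permList (τ e'.1.length) e'.1 with hu'
  have hulen : u.length = L := by simp [hu, ← hLdef]
  have hulen' : u'.length = L := by simp [hu', ← hL]
  have hstar : IsStarStr I u := e.2.2.2
  have hstar' : IsStarStr I u' := by
    have := e'.2.2.2
    rwa [← hu'] at this
  -- derive equalities of last entries
  have hung : u ≠ [] := by rw [← List.length_pos_iff]; omega
  have hung' : u' ≠ [] := by rw [← List.length_pos_iff]; omega
  have hlastI : (L - 1) ∈ I ↔ u.getD (L-1) none = none := by
    have := hstar.2 hung; rwa [hulen] at this
  have hlastI' : (L - 1) ∈ I ↔ u'.getD (L-1) none = none := by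
    have := hstar'.2 hung'; rwa [hulen'] at this
  have hlast2 : u.getD (L-1) none = u'.getD (L-1) none := by
    rw [← hL] at hlast
    by_cases hIL : (L-1) ∈ I
    · rw [hlastI.mp hIL, hlastI'.mp hIL]
    · have hn : u.getD (L-1) none ≠ none := fun hc => hIL (hlastI.mpr hc)
      have hn' : u'.getD (L-1) none ≠ none := fun hc => hIL (hlastI'.mpr hc)
      rcases Option.ne_none_iff_exists'.mp hn with ⟨b, hbv⟩
      rcases Option.ne_none_iff_exists'.mp hn' with ⟨b', hbv'⟩
      rw [hbv, hbv'] at hlast ⊢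
      cases b <;> cases b' <;> simp_all
  -- sParent equation: sigmaStar of plainDrop agree
  have hsp : sigmaStar I (plainDrop u) = sigmaStar I (plainDrop u') := by
    have heq : permList ((τ (L-1))⁻¹) (sigmaStar I (plainDrop u)) =
        permList ((τ (L-1))⁻¹) (sigmaStar I (plainDrop u')) := by
      show permList ((τ (L-1))⁻¹) (sigmaStar I (plainDrop u)) = _
      have e1 : sParent I τ e.1 = permList ((τ (L-1))⁻¹) (sigmaStar I (plainDrop u)) := by
        unfold sParent
        rw [← hLdef, ← hu]
      have e2 : sParent I τ e'.1 = permList ((τ (L-1))⁻¹) (sigmaStar I (plainDrop u')) := by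
        rw [hu']
        unfold sParent
        rw [← hL]
      rw [← e1, ← e2, hp, hp']
    have hpf' : PFix ((τ (L-1))) (L-1) := label_pfix hτ (by omega)
    apply permList_inj (by simp [hulen, hulen']) _ heq
    rw [sigmaStar_length, plainDrop_length, hulen]
    exact hpf'.inv
  -- second entries agree
  have hsnd2 : u.getD (L-2) none = u'.getD (L-2) none := by
    rw [← hL] at hsnd
    rcases Nat.lt_or_ge L 2 with hL2 | hL2
    · have : L = 1 := by omega
      have h0 : L - 2 = L - 1 := by omega
      rw [h0]
      exact hlast2
    · have hn : u.getD (L-2) none ≠ none := by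
        rw [List.getD_eq_getElem _ _ (by omega)]
        have := hstar.1 (L-2) (by omega)
        rwa [List.getD_eq_getElem _ _ (by omega)] at this
      have hn' : u'.getD (L-2) none ≠ none := by
        rw [List.getD_eq_getElem _ _ (by omega)]
        have := hstar'.1 (L-2) (by omega)
        rwa [List.getD_eq_getElem _ _ (by omega)] at this
      rcases Option.ne_none_iff_exists'.mp hn with ⟨b, hbv⟩
      rcases Option.ne_none_iff_exists'.mp hn' with ⟨b', hbv'⟩
      rw [hbv, hbv'] at hsnd ⊢
      cases b <;> cases b' <;> simp_all
  -- plainDrop u = plainDrop u'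
  have hpd : plainDrop u = plainDrop u' := by
    have hpdlen : (plainDrop u).length = L - 1 := by simp [hulen]
    have hpdlen' : (plainDrop u').length = L - 1 := by simp [hulen']
    rcases Nat.eq_zero_or_pos (L - 1) with h0 | hpos
    · have z1 : (plainDrop u).length = 0 := by omega
      have z2 : (plainDrop u').length = 0 := by omega
      rw [List.length_eq_zero_iff.mp z1, List.length_eq_zero_iff.mp z2]
    · -- the key: getD (L-2) of plainDrop relates to u.getD (L-2)
      have hpdlast : ∀ (w : List (Option Bool)), w.length = L → IsStarStr I w →
          (plainDrop w).getD (L-2) default = (w.getD (L-2) none).getD false := by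
        intro w hw hsw
        rw [List.getD_eq_getElem _ _ (by simp [hw]; omega),
          List.getD_eq_getElem _ _ (by omega)]
        simp [plainDrop, List.getElem_dropLast]
      by_cases hIL : (L - 1 - 1) ∈ I
      · -- starred: dropLast determined, last entry from hsnd2
        unfold sigmaStar at hsp
        rw [if_pos ⟨by rw [← List.length_pos_iff]; omega, by rw [hpdlen]; exact hIL⟩,
          if_pos ⟨by rw [← List.length_pos_iff]; omega, by rw [hpdlen']; exact hIL⟩] at hsp
        have hd : (plainDrop u).dropLast = (plainDrop u').dropLast := by
          apply map_some_inj
          have := congrArg List.dropLast hsp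
          rwa [List.dropLast_concat, List.dropLast_concat] at this
        apply list_ext_last (by omega) hd
        rw [hpdlen, hpdlen']
        have hL2 : L - 1 - 1 = L - 2 := by omega
        rw [hL2, hpdlast u hulen hstar, hpdlast u' hulen' hstar', hsnd2]
      · unfold sigmaStar at hsp
        rw [if_neg (by rintro ⟨_, hx⟩; rw [hpdlen] at hx; exact hIL hx),
          if_neg (by rintro ⟨_, hx⟩; rw [hpdlen'] at hx; exact hIL hx)] at hsp
        exact map_some_inj hsp
  -- conclude u = u'
  have huu : u = u' := by
    apply list_ext_last (by omega) _ (by rw [hulen, hulen']; exact hlast2)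
    rw [starStr_dropLast hstar, starStr_dropLast hstar', hpd]
  apply Subtype.ext
  have hfin : permList (τ L) e'.1 = u' := by rw [hu', ← hL]
  apply permList_inj hL (by rw [← hLdef]; exact label_pfix hτ hLh)
  rw [← hu, hfin]
  exact huu

end WeightHelpers
section ColWeights
set_option maxHeartbeats 2000000
variable {h : ℕ} {I : Finset ℕ} {σ τ : ℕ → Equiv.Perm ℕ}

lemma F2_ite_eq_zero {P : Prop} [Decidable P] : ((if P then (1:F2) else 0) = 0) ↔ ¬ P := by
  by_cases hP : P <;> simp [hP]

lemma card_le_two {α : Type*} [DecidableEq α] (s : Finset α) (a b : α)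
    (hs : s ⊆ {a, b}) : s.card ≤ 2 := by
  refine le_trans (Finset.card_le_card hs) ?_
  refine le_trans (Finset.card_insert_le _ _) ?_
  simp

lemma card_le_four {α : Type*} [DecidableEq α] (s : Finset α) (a b c d : α)
    (hs : s ⊆ {a, b, c, d}) : s.card ≤ 4 := by
  refine le_trans (Finset.card_le_card hs) ?_
  refine le_trans (Finset.card_insert_le _ _) (Nat.succ_le_succ ?_)
  refine le_trans (Finset.card_insert_le _ _) (Nat.succ_le_succ ?_)
  refine le_trans (Finset.card_insert_le _ _) (Nat.succ_le_succ ?_)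
  simp

theorem colW2bound (hσ : IsNonInteractingSwap h I σ) (hτ : IsLabel h τ) :
    ∀ c, colW (coneD2 h I σ τ) c ≤ 4 := by
  intro c
  unfold colW
  classical
  rcases c with x | x
  · apply card_le_four _ (Sum.inl (Sum.inl (ιT h x)))
      (Sum.inl (Sum.inl (pT h (fun ℓ => σ ℓ * τ ℓ) x)))
      (Sum.inr (Sum.inl x)) (Sum.inr (Sum.inr (Sum.inl (SLE hτ x.1 x.2.1 x.2.2))))
    intro r hr
    rw [Finset.mem_filter] at hr
    have hr2 := hr.2
    simp only [Finset.mem_insert, Finset.mem_singleton]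
    rcases r with (v | v) | (e1 | y | e3)
    · simp only [coneD2_l, dA_ll, treeMat, ne_eq, F2_ite_eq_zero, not_not] at hr2
      rcases hr2 with hv | hv
      · exact Or.inl (by rw [show v = ιT h x from Subtype.ext hv])
      · exact Or.inr (Or.inl (by
          rw [show v = pT h (fun ℓ => σ ℓ * τ ℓ) x from Subtype.ext hv]))
    · simp only [coneD2_l, dA_rl, ne_eq, not_true_eq_false] at hr2
    · simp only [coneD2_r, g1_ll, ne_eq, F2_ite_eq_zero, not_not] at hr2
      exact Or.inr (Or.inr (Or.inl (by rw [hr2])))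
    · simp only [coneD2_r, g1_sl, ne_eq, F2_ite_eq_zero, not_not] at hr2
      exact Or.inr (Or.inr (Or.inr (by
        rw [show y = SLE hτ x.1 x.2.1 x.2.2 from Subtype.ext hr2])))
    · simp only [coneD2_r, g1_rl, ne_eq, not_true_eq_false] at hr2
  · apply card_le_four _ (Sum.inl (Sum.inr (ιT h x)))
      (Sum.inl (Sum.inr (pT h τ x)))
      (Sum.inr (Sum.inr (Sum.inr x))) (Sum.inr (Sum.inr (Sum.inl (SLE hτ x.1 x.2.1 x.2.2))))
    intro r hr
    rw [Finset.mem_filter] at hr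
    have hr2 := hr.2
    simp only [Finset.mem_insert, Finset.mem_singleton]
    rcases r with (v | v) | (e1 | y | e3)
    · simp only [coneD2_l, dA_lr, ne_eq, not_true_eq_false] at hr2
    · simp only [coneD2_l, dA_rr, treeMat, ne_eq, F2_ite_eq_zero, not_not] at hr2
      rcases hr2 with hv | hv
      · exact Or.inl (by rw [show v = ιT h x from Subtype.ext hv])
      · exact Or.inr (Or.inl (by rw [show v = pT h τ x from Subtype.ext hv]))
    · simp only [coneD2_r, g1_lr, ne_eq, not_true_eq_false] at hr2
    · simp only [coneD2_r, g1_sr, ne_eq, F2_ite_eq_zero, not_not] at hr2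
      exact Or.inr (Or.inr (Or.inr (by
        rw [show y = SLE hτ x.1 x.2.1 x.2.2 from Subtype.ext hr2])))
    · simp only [coneD2_r, g1_rr, ne_eq, F2_ite_eq_zero, not_not] at hr2
      exact Or.inr (Or.inr (Or.inl (by rw [hr2])))

theorem colW1bound (hσ : IsNonInteractingSwap h I σ) (hτ : IsLabel h τ) :
    ∀ c, colW (coneD1 h I σ τ) c ≤ 2 := by
  intro c
  unfold colW
  rcases c with (x | x) | (e1 | e2 | e3)
  · apply card_le_two _ (Sum.inl x) (Sum.inr (Sum.inl (SLV hτ x.1 x.2)))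
    intro r hr
    rw [Finset.mem_filter] at hr
    have hr2 := hr.2
    simp only [Finset.mem_insert, Finset.mem_singleton]
    rcases r with v | y | v
    · simp only [coneD1_l, g0_ll, ne_eq, F2_ite_eq_zero, not_not] at hr2
      exact Or.inl (by rw [hr2])
    · simp only [coneD1_l, g0_sl, ne_eq, F2_ite_eq_zero, not_not] at hr2
      exact Or.inr (by rw [show y = SLV hτ x.1 x.2 from Subtype.ext hr2])
    · simp only [coneD1_l, g0_rl, ne_eq, not_true_eq_false] at hr2
  · apply card_le_two _ (Sum.inr (Sum.inr x)) (Sum.inr (Sum.inl (SLV hτ x.1 x.2)))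
    intro r hr
    rw [Finset.mem_filter] at hr
    have hr2 := hr.2
    simp only [Finset.mem_insert, Finset.mem_singleton]
    rcases r with v | y | v
    · simp only [coneD1_l, g0_lr, ne_eq, not_true_eq_false] at hr2
    · simp only [coneD1_l, g0_sr, ne_eq, F2_ite_eq_zero, not_not] at hr2
      exact Or.inr (by rw [show y = SLV hτ x.1 x.2 from Subtype.ext hr2])
    · simp only [coneD1_l, g0_rr, ne_eq, F2_ite_eq_zero, not_not] at hr2
      exact Or.inl (by rw [hr2])
  · apply card_le_two _ (Sum.inl (ιT h e1)) (Sum.inl (pT h (fun ℓ => σ ℓ * τ ℓ) e1))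
    intro r hr
    rw [Finset.mem_filter] at hr
    have hr2 := hr.2
    simp only [Finset.mem_insert, Finset.mem_singleton]
    rcases r with v | y | v
    · simp only [coneD1_r, dB_11, treeMat, ne_eq, F2_ite_eq_zero, not_not] at hr2
      rcases hr2 with hv | hv
      · exact Or.inl (by rw [show v = ιT h e1 from Subtype.ext hv])
      · exact Or.inr (by rw [show v = pT h (fun ℓ => σ ℓ * τ ℓ) e1 from Subtype.ext hv])
    · simp only [coneD1_r, dB_21, ne_eq, not_true_eq_false] at hr2
    · simp only [coneD1_r, dB_31, ne_eq, not_true_eq_false] at hr2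
  · apply card_le_two _ (Sum.inr (Sum.inl (ιS h I τ e2))) (Sum.inr (Sum.inl (pS h I τ hτ e2)))
    intro r hr
    rw [Finset.mem_filter] at hr
    have hr2 := hr.2
    simp only [Finset.mem_insert, Finset.mem_singleton]
    rcases r with v | y | v
    · simp only [coneD1_r, dB_12, ne_eq, not_true_eq_false] at hr2
    · simp only [coneD1_r, dB_22, sMat, ne_eq, F2_ite_eq_zero, not_not] at hr2
      rcases hr2 with hv | hv
      · exact Or.inl (by rw [show y = ιS h I τ e2 from Subtype.ext hv])
      · exact Or.inr (by rw [show y = pS h I τ hτ e2 from Subtype.ext hv])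
    · simp only [coneD1_r, dB_32, ne_eq, not_true_eq_false] at hr2
  · apply card_le_two _ (Sum.inr (Sum.inr (ιT h e3))) (Sum.inr (Sum.inr (pT h τ e3)))
    intro r hr
    rw [Finset.mem_filter] at hr
    have hr2 := hr.2
    simp only [Finset.mem_insert, Finset.mem_singleton]
    rcases r with v | y | v
    · simp only [coneD1_r, dB_13, ne_eq, not_true_eq_false] at hr2
    · simp only [coneD1_r, dB_23, ne_eq, not_true_eq_false] at hr2
    · simp only [coneD1_r, dB_33, treeMat, ne_eq, F2_ite_eq_zero, not_not] at hr2
      rcases hr2 with hv | hv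
      · exact Or.inl (by rw [show v = ιT h e3 from Subtype.ext hv])
      · exact Or.inr (by rw [show v = pT h τ e3 from Subtype.ext hv])

end ColWeights
section RowWeights
set_option maxHeartbeats 2000000
variable {h : ℕ} {I : Finset ℕ} {σ τ : ℕ → Equiv.Perm ℕ}

lemma bool_ite_inj {b b' : Bool} {u v : Fin 9} (hne : u ≠ v)
    (hv : (if b = false then u else v) = (if b' = false then u else v)) : b = b' := by
  by_cases h1 : b = false <;> by_cases h2 : b' = false <;>
    simp only [h1, h2, if_true, if_false, if_pos, if_neg, Bool.not_eq_false] at hv ⊢ <;>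
    simp_all [Bool.not_eq_false]

lemma bool_ite_inj4 {b b' : Bool} {u v : Fin 4} (hne : u ≠ v)
    (hv : (if b = false then u else v) = (if b' = false then u else v)) : b = b' := by
  by_cases h1 : b = false <;> by_cases h2 : b' = false <;>
    simp only [h1, h2, if_true, if_false, if_pos, if_neg, Bool.not_eq_false] at hv ⊢ <;>
    simp_all [Bool.not_eq_false]

theorem rowW2bound (hσ : IsNonInteractingSwap h I σ) (hτ : IsLabel h τ) :
    ∀ r, rowW (coneD2 h I σ τ) r ≤ 4 := by
  have hτ' : IsLabel h (fun ℓ => σ ℓ * τ ℓ) := stau_label hσ hτ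
  intro r
  unfold rowW
  rcases r with (v | v) | (e1 | y | e3)
  · -- T'S vertex row
    refine le_trans (Finset.card_le_card_of_injOn
      (Sum.elim
        (fun x : TreeE h => if v.1 = x.1 then (0 : Fin 4) else
          (if (permList ((fun ℓ => σ ℓ * τ ℓ) x.1.length) x.1).getD (x.1.length - 1)
            default = false then 1 else 2))
        (fun _ : TreeE h => (3 : Fin 4)))
      (fun a _ => Finset.mem_univ _) ?_) (le_of_eq (Finset.card_fin _))
    intro a ha b hb hab
    simp only [Finset.coe_filter, Finset.mem_univ, true_and, Set.mem_setOf_eq] at ha hb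
    rcases a with x | x
    · rcases b with x' | x'
      · simp only [coneD2_l, dA_ll, treeMat, ne_eq, F2_ite_eq_zero, not_not] at ha hb
        simp only [Sum.elim_inl] at hab
        by_cases h1 : v.1 = x.1 <;> by_cases h2 : v.1 = x'.1
        · exact congrArg Sum.inl (Subtype.ext (h1.symm.trans h2))
        · rw [if_pos h1, if_neg h2] at hab
          split_ifs at hab <;> exact absurd hab (by decide)
        · rw [if_neg h1, if_pos h2] at hab
          split_ifs at hab <;> exact absurd hab (by decide)
        · rw [if_neg h1, if_neg h2] at hab
          have hpx : v.1 = parentStr (fun ℓ => σ ℓ * τ ℓ) x.1 := ha.resolve_left h1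
          have hpx' : v.1 = parentStr (fun ℓ => σ ℓ * τ ℓ) x'.1 := hb.resolve_left h2
          have hlx : x.1.length = x'.1.length := by
            have l1 := congrArg List.length hpx
            have l2 := congrArg List.length hpx'
            rw [parentStr_length] at l1 l2
            have := x.2.1; have := x'.2.1
            omega
          have hbit := bool_ite_inj4 (by decide) hab
          exact congrArg Sum.inl (Subtype.ext (parent_lastbit_inj hτ' hlx x.2.1 x.2.2
            (hpx.symm.trans hpx') hbit))
      · simp only [coneD2_l, dA_lr, ne_eq, not_true_eq_false] at hb
    · simp only [coneD2_l, dA_lr, ne_eq, not_true_eq_false] at ha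
  · -- ST vertex row
    refine le_trans (Finset.card_le_card_of_injOn
      (Sum.elim (fun _ : TreeE h => (3 : Fin 4))
        (fun x : TreeE h => if v.1 = x.1 then (0 : Fin 4) else
          (if (permList (τ x.1.length) x.1).getD (x.1.length - 1) default = false
            then 1 else 2)))
      (fun a _ => Finset.mem_univ _) ?_) (le_of_eq (Finset.card_fin _))
    intro a ha b hb hab
    simp only [Finset.coe_filter, Finset.mem_univ, true_and, Set.mem_setOf_eq] at ha hb
    rcases a with x | x
    · simp only [coneD2_l, dA_rl, ne_eq, not_true_eq_false] at ha
    · rcases b with x' | x'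
      · simp only [coneD2_l, dA_rl, ne_eq, not_true_eq_false] at hb
      · simp only [coneD2_l, dA_rr, treeMat, ne_eq, F2_ite_eq_zero, not_not] at ha hb
        simp only [Sum.elim_inr] at hab
        by_cases h1 : v.1 = x.1 <;> by_cases h2 : v.1 = x'.1
        · exact congrArg Sum.inr (Subtype.ext (h1.symm.trans h2))
        · rw [if_pos h1, if_neg h2] at hab
          split_ifs at hab <;> exact absurd hab (by decide)
        · rw [if_neg h1, if_pos h2] at hab
          split_ifs at hab <;> exact absurd hab (by decide)
        · rw [if_neg h1, if_neg h2] at hab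
          have hpx : v.1 = parentStr τ x.1 := ha.resolve_left h1
          have hpx' : v.1 = parentStr τ x'.1 := hb.resolve_left h2
          have hlx : x.1.length = x'.1.length := by
            have l1 := congrArg List.length hpx
            have l2 := congrArg List.length hpx'
            rw [parentStr_length] at l1 l2
            have := x.2.1; have := x'.2.1
            omega
          have hbit := bool_ite_inj4 (by decide) hab
          exact congrArg Sum.inr (Subtype.ext (parent_lastbit_inj hτ hlx x.2.1 x.2.2
            (hpx.symm.trans hpx') hbit))
  · -- T' edge row
    refine le_trans (Finset.card_le_card_of_injOn
      (fun _ => (0 : Fin 4))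
      (fun a _ => Finset.mem_univ _) ?_) (le_of_eq (Finset.card_fin _))
    intro a ha b hb hab
    simp only [Finset.coe_filter, Finset.mem_univ, true_and, Set.mem_setOf_eq] at ha hb
    rcases a with x | x
    · rcases b with x' | x'
      · simp only [coneD2_r, g1_ll, ne_eq, F2_ite_eq_zero, not_not] at ha hb
        rw [← ha, ← hb]
      · simp only [coneD2_r, g1_lr, ne_eq, not_true_eq_false] at hb
    · simp only [coneD2_r, g1_lr, ne_eq, not_true_eq_false] at ha
  · -- S edge row
    refine le_trans (Finset.card_le_card_of_injOn
      (Sum.elim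
        (fun x : TreeE h => if (permList (τ x.1.length) x.1).getD (x.1.length - 1)
            default = false then (0 : Fin 4) else 1)
        (fun x : TreeE h => if (permList (τ x.1.length) x.1).getD (x.1.length - 1)
            default = false then (2 : Fin 4) else 3))
      (fun a _ => Finset.mem_univ _) ?_) (le_of_eq (Finset.card_fin _))
    intro a ha b hb hab
    simp only [Finset.coe_filter, Finset.mem_univ, true_and, Set.mem_setOf_eq] at ha hb
    rcases a with x | x <;> rcases b with x' | x' <;>
      simp only [coneD2_r, g1_sl, g1_sr, ne_eq, F2_ite_eq_zero, not_not] at ha hb <;>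
      simp only [Sum.elim_inl, Sum.elim_inr] at hab
    · have hlx : x.1.length = x'.1.length := by
        have l1 := congrArg List.length ha
        have l2 := congrArg List.length hb
        rw [starLabel_length] at l1 l2
        omega
      have hbit := bool_ite_inj4 (by decide) hab
      exact congrArg Sum.inl (Subtype.ext (starLabel_lastbit_inj hτ hlx x.2.2
        (ha.symm.trans hb) hbit))
    · split_ifs at hab <;> exact absurd hab (by decide)
    · split_ifs at hab <;> exact absurd hab (by decide)
    · have hlx : x.1.length = x'.1.length := by
        have l1 := congrArg List.length ha
        have l2 := congrArg List.length hb
        rw [starLabel_length] at l1 l2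
        omega
      have hbit := bool_ite_inj4 (by decide) hab
      exact congrArg Sum.inr (Subtype.ext (starLabel_lastbit_inj hτ hlx x.2.2
        (ha.symm.trans hb) hbit))
  · -- T edge row
    refine le_trans (Finset.card_le_card_of_injOn
      (fun _ => (0 : Fin 4))
      (fun a _ => Finset.mem_univ _) ?_) (le_of_eq (Finset.card_fin _))
    intro a ha b hb hab
    simp only [Finset.coe_filter, Finset.mem_univ, true_and, Set.mem_setOf_eq] at ha hb
    rcases a with x | x
    · simp only [coneD2_r, g1_rl, ne_eq, not_true_eq_false] at ha
    · rcases b with x' | x'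
      · simp only [coneD2_r, g1_rl, ne_eq, not_true_eq_false] at hb
      · simp only [coneD2_r, g1_rr, ne_eq, F2_ite_eq_zero, not_not] at ha hb
        rw [← ha, ← hb]

end RowWeights
section RowW1
set_option maxHeartbeats 2000000
variable {h : ℕ} {I : Finset ℕ} {σ τ : ℕ → Equiv.Perm ℕ}

lemma enc_inj {p q p' q' : Prop} [Decidable p] [Decidable q] [Decidable p'] [Decidable q']
    (hv : (if p then (if q then (8 : Fin 9) else 7) else (if q then 6 else 5)) =
      (if p' then (if q' then 8 else 7) else (if q' then 6 else 5))) :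
    (p ↔ p') ∧ (q ↔ q') := by
  by_cases hp : p <;> by_cases hq : q <;> by_cases hp' : p' <;> by_cases hq' : q' <;>
    simp only [hp, hq, hp', hq', if_true, if_false] at hv <;>
    first
      | exact absurd hv (by decide)
      | exact ⟨iff_of_true hp hp', iff_of_true hq hq'⟩
      | exact ⟨iff_of_true hp hp', iff_of_false hq hq'⟩
      | exact ⟨iff_of_false hp hp', iff_of_true hq hq'⟩
      | exact ⟨iff_of_false hp hp', iff_of_false hq hq'⟩

theorem rowW1bound (hσ : IsNonInteractingSwap h I σ) (hτ : IsLabel h τ) :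
    ∀ r, rowW (coneD1 h I σ τ) r ≤ 9 := by
  have hτ' : IsLabel h (fun ℓ => σ ℓ * τ ℓ) := stau_label hσ hτ
  intro r
  unfold rowW
  rcases r with w | y | w
  · -- T' vertex row
    refine le_trans (Finset.card_le_card_of_injOn
      (Sum.elim (Sum.elim (fun _ : TreeV h => (0 : Fin 9)) (fun _ : TreeV h => 4))
        (Sum.elim
          (fun e : TreeE h => if w.1 = e.1 then (1 : Fin 9) else
            (if (permList ((fun ℓ => σ ℓ * τ ℓ) e.1.length) e.1).getD (e.1.length - 1)
              default = false then 2 else 3))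
          (Sum.elim (fun _ : SE h I τ => (4 : Fin 9)) (fun _ : TreeE h => 4))))
      (fun a _ => Finset.mem_univ _) ?_) (le_of_eq (Finset.card_fin _))
    intro a ha b hb hab
    simp only [Finset.coe_filter, Finset.mem_univ, true_and, Set.mem_setOf_eq] at ha hb
    rcases a with (x | x) | (e | ee | e)
    rotate_left 1
    · simp only [coneD1_l, g0_lr, ne_eq, not_true_eq_false] at ha
    rotate_left 1
    · simp only [coneD1_r, dB_12, ne_eq, not_true_eq_false] at ha
    · simp only [coneD1_r, dB_13, ne_eq, not_true_eq_false] at ha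
    · -- a = g0 column (inl (inl x))
      rcases b with (x' | x') | (e' | ee' | e')
      rotate_left 1
      · simp only [coneD1_l, g0_lr, ne_eq, not_true_eq_false] at hb
      rotate_left 1
      · simp only [coneD1_r, dB_12, ne_eq, not_true_eq_false] at hb
      · simp only [coneD1_r, dB_13, ne_eq, not_true_eq_false] at hb
      · simp only [coneD1_l, g0_ll, ne_eq, F2_ite_eq_zero, not_not] at ha hb
        rw [← ha, ← hb]
      · -- a vertex col, b edge col : values 0 vs 1/2/3
        simp only [Sum.elim_inl, Sum.elim_inr] at hab
        split_ifs at hab <;> exact absurd hab (by decide)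
    · -- a = dB column (inr (inl e))
      rcases b with (x' | x') | (e' | ee' | e')
      rotate_left 1
      · simp only [coneD1_l, g0_lr, ne_eq, not_true_eq_false] at hb
      rotate_left 1
      · simp only [coneD1_r, dB_12, ne_eq, not_true_eq_false] at hb
      · simp only [coneD1_r, dB_13, ne_eq, not_true_eq_false] at hb
      · simp only [Sum.elim_inl, Sum.elim_inr] at hab
        split_ifs at hab <;> exact absurd hab (by decide)
      · simp only [coneD1_r, dB_11, treeMat, ne_eq, F2_ite_eq_zero, not_not] at ha hb
        simp only [Sum.elim_inl, Sum.elim_inr] at hab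
        by_cases h1 : w.1 = e.1 <;> by_cases h2 : w.1 = e'.1
        · exact congrArg (fun z => Sum.inr (Sum.inl z)) (Subtype.ext (h1.symm.trans h2))
        · rw [if_pos h1, if_neg h2] at hab
          split_ifs at hab <;> exact absurd hab (by decide)
        · rw [if_neg h1, if_pos h2] at hab
          split_ifs at hab <;> exact absurd hab (by decide)
        · rw [if_neg h1, if_neg h2] at hab
          have hpx : w.1 = parentStr (fun ℓ => σ ℓ * τ ℓ) e.1 := ha.resolve_left h1
          have hpx' : w.1 = parentStr (fun ℓ => σ ℓ * τ ℓ) e'.1 := hb.resolve_left h2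
          have hlx : e.1.length = e'.1.length := by
            have l1 := congrArg List.length hpx
            have l2 := congrArg List.length hpx'
            rw [parentStr_length] at l1 l2
            have := e.2.1; have := e'.2.1
            omega
          have hbit := bool_ite_inj (by decide) hab
          exact congrArg (fun z => Sum.inr (Sum.inl z))
            (Subtype.ext (parent_lastbit_inj hτ' hlx e.2.1 e.2.2
              (hpx.symm.trans hpx') hbit))
  · -- S vertex row (the size-9 case)
    refine le_trans (Finset.card_le_card_of_injOn
      (Sum.elim
        (Sum.elim
          (fun x : TreeV h => if (permList (τ x.1.length) x.1).getD (x.1.length - 1)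
            default = false then (0 : Fin 9) else 1)
          (fun x : TreeV h => if (permList (τ x.1.length) x.1).getD (x.1.length - 1)
            default = false then (2 : Fin 9) else 3))
        (Sum.elim (fun _ : TreeE h => (4 : Fin 9))
          (Sum.elim
            (fun e : SE h I τ => if y.1 = e.1 then (4 : Fin 9) else
              (if (permList (τ e.1.length) e.1).getD (e.1.length - 1) none = some true then
                (if (permList (τ e.1.length) e.1).getD (e.1.length - 2) none = some true
                  then 8 else 7)
               else
                (if (permList (τ e.1.length) e.1).getD (e.1.length - 2) none = some true
                  then 6 else 5)))
            (fun _ : TreeE h => (4 : Fin 9)))))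
      (fun a _ => Finset.mem_univ _) ?_) (le_of_eq (Finset.card_fin _))
    intro a ha b hb hab
    simp only [Finset.coe_filter, Finset.mem_univ, true_and, Set.mem_setOf_eq] at ha hb
    rcases a with (x | x) | (e | ee | e)
    rotate_left 2
    · simp only [coneD1_r, dB_21, ne_eq, not_true_eq_false] at ha
    rotate_left 1
    · simp only [coneD1_r, dB_23, ne_eq, not_true_eq_false] at ha
    · -- a = inl inl x
      rcases b with (x' | x') | (e' | ee' | e')
      rotate_left 2
      · simp only [coneD1_r, dB_21, ne_eq, not_true_eq_false] at hb
      rotate_left 1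
      · simp only [coneD1_r, dB_23, ne_eq, not_true_eq_false] at hb
      · simp only [coneD1_l, g0_sl, ne_eq, F2_ite_eq_zero, not_not] at ha hb
        simp only [Sum.elim_inl] at hab
        have hlx : x.1.length = x'.1.length := by
          have l1 := congrArg List.length ha
          have l2 := congrArg List.length hb
          rw [starLabel_length] at l1 l2
          omega
        have hbit := bool_ite_inj (by decide) hab
        exact congrArg (fun z => Sum.inl (Sum.inl z))
          (Subtype.ext (starLabel_lastbit_inj hτ hlx x.2 (ha.symm.trans hb) hbit))
      · simp only [Sum.elim_inl, Sum.elim_inr] at hab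
        split_ifs at hab <;> exact absurd hab (by decide)
      · -- b = S edge column : 0/1 vs 4..8
        simp only [coneD1_l, coneD1_r, dB_22, sMat, g0_sl, ne_eq, F2_ite_eq_zero,
          not_not] at ha hb
        simp only [Sum.elim_inl, Sum.elim_inr] at hab
        split_ifs at hab <;> exact absurd hab (by decide)
    · -- a = inl inr x
      rcases b with (x' | x') | (e' | ee' | e')
      rotate_left 2
      · simp only [coneD1_r, dB_21, ne_eq, not_true_eq_false] at hb
      rotate_left 1
      · simp only [coneD1_r, dB_23, ne_eq, not_true_eq_false] at hb
      · simp only [Sum.elim_inl, Sum.elim_inr] at hab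
        split_ifs at hab <;> exact absurd hab (by decide)
      · simp only [coneD1_l, g0_sr, ne_eq, F2_ite_eq_zero, not_not] at ha hb
        simp only [Sum.elim_inl, Sum.elim_inr] at hab
        have hlx : x.1.length = x'.1.length := by
          have l1 := congrArg List.length ha
          have l2 := congrArg List.length hb
          rw [starLabel_length] at l1 l2
          omega
        have hbit := bool_ite_inj (by decide) hab
        exact congrArg (fun z => Sum.inl (Sum.inr z))
          (Subtype.ext (starLabel_lastbit_inj hτ hlx x.2 (ha.symm.trans hb) hbit))
      · simp only [Sum.elim_inl, Sum.elim_inr] at hab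
        split_ifs at hab <;> exact absurd hab (by decide)
    · -- a = S edge column
      rcases b with (x' | x') | (e' | ee' | e')
      rotate_left 2
      · simp only [coneD1_r, dB_21, ne_eq, not_true_eq_false] at hb
      rotate_left 1
      · simp only [coneD1_r, dB_23, ne_eq, not_true_eq_false] at hb
      · simp only [Sum.elim_inl, Sum.elim_inr] at hab
        split_ifs at hab <;> exact absurd hab (by decide)
      · simp only [Sum.elim_inl, Sum.elim_inr] at hab
        split_ifs at hab <;> exact absurd hab (by decide)
      · -- both S edge columns
        simp only [coneD1_r, dB_22, sMat, ne_eq, F2_ite_eq_zero, not_not] at ha hb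
        simp only [Sum.elim_inl, Sum.elim_inr] at hab
        by_cases h1 : y.1 = ee.1 <;> by_cases h2 : y.1 = ee'.1
        · exact congrArg (fun z => Sum.inr (Sum.inr (Sum.inl z)))
            (Subtype.ext (h1.symm.trans h2))
        · rw [if_pos h1, if_neg h2] at hab
          split_ifs at hab <;> exact absurd hab (by decide)
        · rw [if_neg h1, if_pos h2] at hab
          split_ifs at hab <;> exact absurd hab (by decide)
        · rw [if_neg h1, if_neg h2] at hab
          have hpx : y.1 = sParent I τ ee.1 := ha.resolve_left h1
          have hpx' : y.1 = sParent I τ ee'.1 := hb.resolve_left h2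
          obtain ⟨hf1, hf2⟩ := enc_inj hab
          exact congrArg (fun z => Sum.inr (Sum.inr (Sum.inl z)))
            (schild_inj hτ hpx.symm hpx'.symm hf1 hf2)
  · -- T vertex row
    refine le_trans (Finset.card_le_card_of_injOn
      (Sum.elim (Sum.elim (fun _ : TreeV h => (4 : Fin 9)) (fun _ : TreeV h => 0))
        (Sum.elim (fun _ : TreeE h => (4 : Fin 9))
          (Sum.elim (fun _ : SE h I τ => (4 : Fin 9))
            (fun e : TreeE h => if w.1 = e.1 then (1 : Fin 9) else
              (if (permList (τ e.1.length) e.1).getD (e.1.length - 1) default = false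
                then 2 else 3)))))
      (fun a _ => Finset.mem_univ _) ?_) (le_of_eq (Finset.card_fin _))
    intro a ha b hb hab
    simp only [Finset.coe_filter, Finset.mem_univ, true_and, Set.mem_setOf_eq] at ha hb
    rcases a with (x | x) | (e | ee | e)
    · simp only [coneD1_l, g0_rl, ne_eq, not_true_eq_false] at ha
    · -- a = g0 column (inl (inr x))
      rcases b with (x' | x') | (e' | ee' | e')
      · simp only [coneD1_l, g0_rl, ne_eq, not_true_eq_false] at hb
      · simp only [coneD1_l, g0_rr, ne_eq, F2_ite_eq_zero, not_not] at ha hb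
        rw [← ha, ← hb]
      · simp only [coneD1_r, dB_31, ne_eq, not_true_eq_false] at hb
      · simp only [coneD1_r, dB_32, ne_eq, not_true_eq_false] at hb
      · simp only [Sum.elim_inl, Sum.elim_inr] at hab
        split_ifs at hab <;> exact absurd hab (by decide)
    · simp only [coneD1_r, dB_31, ne_eq, not_true_eq_false] at ha
    · simp only [coneD1_r, dB_32, ne_eq, not_true_eq_false] at ha
    · -- a = dB column (inr (inr (inr e)))
      rcases b with (x' | x') | (e' | ee' | e')
      · simp only [coneD1_l, g0_rl, ne_eq, not_true_eq_false] at hb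
      · simp only [Sum.elim_inl, Sum.elim_inr] at hab
        split_ifs at hab <;> exact absurd hab (by decide)
      · simp only [coneD1_r, dB_31, ne_eq, not_true_eq_false] at hb
      · simp only [coneD1_r, dB_32, ne_eq, not_true_eq_false] at hb
      · simp only [coneD1_r, dB_33, treeMat, ne_eq, F2_ite_eq_zero, not_not] at ha hb
        simp only [Sum.elim_inl, Sum.elim_inr] at hab
        by_cases h1 : w.1 = e.1 <;> by_cases h2 : w.1 = e'.1
        · exact congrArg (fun z => Sum.inr (Sum.inr (Sum.inr z)))
            (Subtype.ext (h1.symm.trans h2))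
        · rw [if_pos h1, if_neg h2] at hab
          split_ifs at hab <;> exact absurd hab (by decide)
        · rw [if_neg h1, if_pos h2] at hab
          split_ifs at hab <;> exact absurd hab (by decide)
        · rw [if_neg h1, if_neg h2] at hab
          have hpx : w.1 = parentStr τ e.1 := ha.resolve_left h1
          have hpx' : w.1 = parentStr τ e'.1 := hb.resolve_left h2
          have hlx : e.1.length = e'.1.length := by
            have l1 := congrArg List.length hpx
            have l2 := congrArg List.length hpx'
            rw [parentStr_length] at l1 l2
            have := e.2.1; have := e'.2.1
            omega
          have hbit := bool_ite_inj (by decide) hab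
          exact congrArg (fun z => Sum.inr (Sum.inr (Sum.inr z)))
            (Subtype.ext (parent_lastbit_inj hτ hlx e.2.1 e.2.2
              (hpx.symm.trans hpx') hbit))

end RowW1
theorem stmt3 (h : ℕ) (hh : 1 ≤ h) (I : Finset ℕ) (σ τ : ℕ → Equiv.Perm ℕ)
    (hσ : IsNonInteractingSwap h I σ) (hτ : IsLabel h τ) :
    -- g is a chain map
    g0 h I τ * dA h σ τ = dB h I σ τ * g1 h I τ ∧
    -- H₂(C) = 0, H₁(C) = 0, H₀(C) ≅ F₂
    H2Trivial (coneD2 h I σ τ) ∧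
    H1Trivial (coneD2 h I σ τ) (coneD1 h I σ τ) ∧
    H0IsF2 (coneD1 h I σ τ) ∧
    -- weights
    (∀ c, colW (coneD2 h I σ τ) c ≤ 4) ∧
    (∀ r, rowW (coneD2 h I σ τ) r ≤ 4) ∧
    (∀ c, colW (coneD1 h I σ τ) c ≤ 2) ∧
    (∀ r, rowW (coneD1 h I σ τ) r ≤ 9) :=
  ⟨chain_map h I σ τ hσ hτ, H2main hσ hτ, H1main hσ hτ, H0main hh hσ hτ,
    colW2bound hσ hτ, rowW2bound hσ hτ, colW1bound hσ hτ, rowW1bound hσ hτ⟩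
end

section
/- Let h₀, h₁ ≥ 1 and h = h₀ + h₁, and let τ_h be the permutation of {1,…,h} for which, for every bit string s₁⋯s_h, the reordered string is s_{h₀+1}⋯s_h s₁⋯s_{h₀} (i.e. the block transposition exchanging the first h₀ positions with the last h₁ positions). Then there exist h permutations π¹,…,πʰ of {1,…,h}, each of which is a product of transpositions of the form (i, i+1) over a set of pairwise disjoint pairs {i, i+1}, such that πʰ ∘ ⋯ ∘ π¹ = τ_h. -/
/-- `π` is a non-interacting layer of adjacent transpositions of the positions
`{0, …, h-1}` (0-indexed): it is the product of the transpositions of positions `i, i+1`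
over a set `J` of indices such that the pairs `{i, i+1}`, `i ∈ J`, are pairwise disjoint. -/
def IsNILayer (h : ℕ) (π : Equiv.Perm ℕ) : Prop :=
  ∃ J : Finset ℕ,
    (∀ i ∈ J, i + 2 ≤ h) ∧
    (∀ i ∈ J, ∀ j ∈ J, i ≠ j → i + 2 ≤ j ∨ j + 2 ≤ i) ∧
    (∀ i ∈ J, π i = i + 1 ∧ π (i + 1) = i) ∧
    (∀ p, (∀ i ∈ J, p ≠ i ∧ p ≠ i + 1) → π p = p)

namespace Stmt16Aux

def posA (h₀ h₁ k t : ℕ) : ℕ := k + min h₁ (t + k + 1 - h₀)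

def posB (h₀ j t : ℕ) : ℕ := h₀ + j - min h₀ (t - j)

def movesA (h₀ h₁ k t : ℕ) : Prop := k < h₀ ∧ h₀ ≤ t + k + 1 ∧ t + k + 1 < h₀ + h₁

def inJ (h₀ h₁ t p : ℕ) : Prop := ∃ k, movesA h₀ h₁ k t ∧ p = posA h₀ h₁ k t

lemma posA_rep {h₀ h₁ k t : ℕ} (h : movesA h₀ h₁ k t) :
    posA h₀ h₁ k t + h₀ = 2 * k + t + 1 := by
  obtain ⟨a, b, c⟩ := h; unfold posA; omega

lemma posA_ne_posB {h₀ h₁ k j t : ℕ} (hk : k < h₀) (hj : j < h₁) :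
    posA h₀ h₁ k t ≠ posB h₀ j t := by
  unfold posA posB; omega

lemma posA_strictMono {h₀ h₁ k k' t : ℕ} (h : k < k') :
    posA h₀ h₁ k t < posA h₀ h₁ k' t := by
  unfold posA; omega

lemma posB_strictMono {h₀ j j' t : ℕ} (h : j < j') :
    posB h₀ j t < posB h₀ j' t := by
  unfold posB; omega

lemma pairing {h₀ h₁ k t : ℕ} (h : movesA h₀ h₁ k t) :
    posB h₀ (t + k + 1 - h₀) t = posA h₀ h₁ k t + 1 := by
  obtain ⟨a, b, c⟩ := h; unfold posA posB; omega

lemma not_inJ_succ {h₀ h₁ t p : ℕ} (h : inJ h₀ h₁ t p) : ¬ inJ h₀ h₁ t (p + 1) := by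
  obtain ⟨k, hk, rfl⟩ := h
  rintro ⟨k', hk', he⟩
  have e1 := posA_rep hk
  have e2 := posA_rep hk'
  omega

open Classical in
noncomputable def layerF (h₀ h₁ t : ℕ) : ℕ → ℕ := fun p =>
  if inJ h₀ h₁ t p then p + 1
  else if ∃ q, inJ h₀ h₁ t q ∧ p = q + 1 then p - 1 else p

lemma layerF_inJ {h₀ h₁ t p : ℕ} (h : inJ h₀ h₁ t p) : layerF h₀ h₁ t p = p + 1 := by
  classical
  rw [layerF, if_pos h]

lemma layerF_succ_inJ {h₀ h₁ t p : ℕ} (h : inJ h₀ h₁ t p) :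
    layerF h₀ h₁ t (p + 1) = p := by
  classical
  rw [layerF, if_neg (not_inJ_succ h), if_pos ⟨p, h, rfl⟩]
  omega

lemma layerF_fixed {h₀ h₁ t p : ℕ} (h1 : ¬ inJ h₀ h₁ t p)
    (h2 : ∀ q, inJ h₀ h₁ t q → p ≠ q + 1) : layerF h₀ h₁ t p = p := by
  classical
  rw [layerF, if_neg h1, if_neg]
  rintro ⟨q, hq, rfl⟩
  exact h2 q hq rfl

lemma layerF_invol (h₀ h₁ t : ℕ) : Function.Involutive (layerF h₀ h₁ t) := by
  classical
  intro p
  by_cases h1 : inJ h₀ h₁ t p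
  · rw [layerF_inJ h1, layerF_succ_inJ h1]
  · by_cases h2 : ∃ q, inJ h₀ h₁ t q ∧ p = q + 1
    · obtain ⟨q, hq, rfl⟩ := h2
      rw [layerF_succ_inJ hq, layerF_inJ hq]
    · rw [layerF_fixed h1 (fun q hq hne => h2 ⟨q, hq, hne⟩),
        layerF_fixed h1 (fun q hq hne => h2 ⟨q, hq, hne⟩)]

noncomputable def layer (h₀ h₁ t : ℕ) : Equiv.Perm ℕ :=
  (layerF_invol h₀ h₁ t).toPerm

lemma layer_apply (h₀ h₁ t p : ℕ) : layer h₀ h₁ t p = layerF h₀ h₁ t p := rfl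

lemma isNILayer_layer (h₀ h₁ t : ℕ) : IsNILayer (h₀ + h₁) (layer h₀ h₁ t) := by
  classical
  refine ⟨((Finset.range h₀).filter (fun k => movesA h₀ h₁ k t)).image
      (fun k => posA h₀ h₁ k t), ?_, ?_, ?_, ?_⟩
  · intro i hi
    simp only [Finset.mem_image, Finset.mem_filter, Finset.mem_range] at hi
    obtain ⟨k, ⟨hk, hm⟩, rfl⟩ := hi
    have := posA_rep hm
    obtain ⟨a, b, c⟩ := hm
    omega
  · intro i hi j hj hij
    simp only [Finset.mem_image, Finset.mem_filter, Finset.mem_range] at hi hj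
    obtain ⟨k, ⟨hk, hm⟩, rfl⟩ := hi
    obtain ⟨k', ⟨hk', hm'⟩, rfl⟩ := hj
    have := posA_rep hm
    have := posA_rep hm'
    omega
  · intro i hi
    simp only [Finset.mem_image, Finset.mem_filter, Finset.mem_range] at hi
    obtain ⟨k, ⟨hk, hm⟩, rfl⟩ := hi
    have hiJ : inJ h₀ h₁ t (posA h₀ h₁ k t) := ⟨k, hm, rfl⟩
    exact ⟨layerF_inJ hiJ, layerF_succ_inJ hiJ⟩
  · intro p hp
    refine layerF_fixed ?_ ?_
    · rintro ⟨k, hm, rfl⟩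
      exact (hp _ (Finset.mem_image.2 ⟨k, Finset.mem_filter.2
        ⟨Finset.mem_range.2 hm.1, hm⟩, rfl⟩)).1 rfl
    · rintro q ⟨k, hm, rfl⟩ he
      exact (hp _ (Finset.mem_image.2 ⟨k, Finset.mem_filter.2
        ⟨Finset.mem_range.2 hm.1, hm⟩, rfl⟩)).2 he

def rho (h₀ h₁ t x : ℕ) : ℕ :=
  if x < h₀ then posA h₀ h₁ x t else if x < h₀ + h₁ then posB h₀ (x - h₀) t else x

lemma rho_zero (h₀ h₁ x : ℕ) : rho h₀ h₁ 0 x = x := by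
  unfold rho posA posB; split_ifs <;> omega

lemma step (h₀ h₁ t x : ℕ) : layer h₀ h₁ t (rho h₀ h₁ t x) = rho h₀ h₁ (t + 1) x := by
  rw [layer_apply]
  unfold rho
  split_ifs with hx hx'
  · -- A-particle x
    by_cases hm : movesA h₀ h₁ x t
    · have h1 : posA h₀ h₁ x (t+1) = posA h₀ h₁ x t + 1 := by
        obtain ⟨a, b, c⟩ := hm; unfold posA; omega
      rw [layerF_inJ ⟨x, hm, rfl⟩, h1]
    · have heq : posA h₀ h₁ x (t+1) = posA h₀ h₁ x t := by
        unfold movesA at hm; unfold posA; omega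
      rw [heq]
      refine layerF_fixed ?_ ?_
      · rintro ⟨k, hk, he⟩
        rcases Nat.lt_trichotomy x k with h | h | h
        · exact absurd he (Nat.ne_of_lt (posA_strictMono h))
        · exact hm (h ▸ hk)
        · exact absurd he.symm (Nat.ne_of_lt (posA_strictMono h))
      · rintro q ⟨k, hk, rfl⟩ he
        have hp := pairing hk
        exact absurd (show posA h₀ h₁ x t = posB h₀ (t + k + 1 - h₀) t by omega)
          (posA_ne_posB hx (by obtain ⟨a,b,c⟩ := hk; omega))
  · -- B-particle j = x - h₀
    set j := x - h₀ with hj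
    have hjlt : j < h₁ := by omega
    by_cases hm : j ≤ t ∧ t < j + h₀
    · set k := h₀ + j - (t + 1) with hk
      have hmk : movesA h₀ h₁ k t := by refine ⟨by omega, by omega, by omega⟩
      have hjk : t + k + 1 - h₀ = j := by omega
      have hp := pairing hmk
      rw [hjk] at hp
      have h1 : posB h₀ j (t+1) = posB h₀ j t - 1 := by unfold posB; omega
      rw [hp, layerF_succ_inJ ⟨k, hmk, rfl⟩, h1, hp]
      omega
    · have heq : posB h₀ j (t+1) = posB h₀ j t := by unfold posB; omega
      rw [heq]
      refine layerF_fixed ?_ ?_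
      · rintro ⟨k, hk, he⟩
        exact posA_ne_posB hk.1 hjlt he.symm
      · rintro q ⟨k, hk, rfl⟩ he
        have hp := pairing hk
        set j' := t + k + 1 - h₀ with hj'
        have hbb : posB h₀ j' t = posB h₀ j t := by omega
        have hj'lt : j' < h₁ := by obtain ⟨a,b,c⟩ := hk; omega
        have hjj : j' = j := by
          rcases Nat.lt_trichotomy j' j with h | h | h
          · exact absurd hbb (Nat.ne_of_lt (posB_strictMono h))
          · exact h
          · exact absurd hbb.symm (Nat.ne_of_lt (posB_strictMono h))
        obtain ⟨a, b, c⟩ := hk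
        omega
  · -- fixed point x ≥ h₀ + h₁
    refine layerF_fixed ?_ ?_
    · rintro ⟨k, hk, he⟩
      have := posA_rep hk
      obtain ⟨a, b, c⟩ := hk
      omega
    · rintro q ⟨k, hk, rfl⟩ he
      have := posA_rep hk
      obtain ⟨a, b, c⟩ := hk
      omega

end Stmt16Aux

namespace Stmt16Aux

lemma rho_final (h₀ h₁ p : ℕ) :
    rho h₀ h₁ (h₀ + h₁) p =
      if p < h₀ then p + h₁ else if p < h₀ + h₁ then p - h₀ else p := by
  unfold rho posA posB; split_ifs <;> omega

lemma prod_layers (h₀ h₁ n x : ℕ) :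
    (((List.range n).reverse.map (layer h₀ h₁)).prod) x = rho h₀ h₁ n x := by
  induction n with
  | zero => simp [rho_zero]
  | succ n ih =>
    rw [List.range_succ, List.reverse_append, List.reverse_singleton,
      List.singleton_append, List.map_cons, List.prod_cons, Equiv.Perm.mul_apply, ih, step]

end Stmt16Aux


theorem stmt16 (h₀ h₁ : ℕ) (hh₀ : 1 ≤ h₀) (hh₁ : 1 ≤ h₁)
    (π : Equiv.Perm ℕ)
    (hfix : ∀ p, h₀ + h₁ ≤ p → π p = p)
    (hact : ∀ s : List Bool, s.length = h₀ + h₁ →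
      permList π s = s.drop h₀ ++ s.take h₀) :
    ∃ f : Fin (h₀ + h₁) → Equiv.Perm ℕ,
      (∀ k, IsNILayer (h₀ + h₁) (f k)) ∧
      (List.ofFn f).reverse.prod = π := by
  classical
  have hsymmlt : ∀ j, j < h₀ + h₁ → π.symm j < h₀ + h₁ := by
    intro j hj
    by_contra hge
    push_neg at hge
    have h1 := hfix _ hge
    rw [Equiv.apply_symm_apply] at h1
    omega
  have key : ∀ q, q < h₀ + h₁ → ∀ j, j < h₀ + h₁ →
      ((j < h₁ ∧ q = h₀ + j) ∨ (h₁ ≤ j ∧ q = j - h₁)) → π.symm j = q := by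
    intro q hq j hj hcase
    set s : List Bool := (List.range (h₀ + h₁)).map (fun i => decide (i = q)) with hs
    have hslen : s.length = h₀ + h₁ := by simp [hs]
    have E := congrArg (fun l => l.getD j false) (hact s hslen)
    have hL : (permList π s).getD j false = decide (π.symm j = q) := by
      rw [permList, hslen, List.getD_eq_getElem _ _ (by simpa using hj)]
      simp only [List.getElem_map, List.getElem_range]
      rw [List.getD_eq_getElem _ _ (by rw [hslen]; exact hsymmlt j hj)]
      simp [hs]
    have hdroplen : (s.drop h₀).length = h₁ := by rw [List.length_drop, hslen]; omega
    have hR : (s.drop h₀ ++ s.take h₀).getD j false = true := by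
      rcases hcase with ⟨hj1, rfl⟩ | ⟨hj1, hq1⟩
      · rw [List.getD_eq_getElem _ _ (by simp [hdroplen]; omega),
          List.getElem_append_left (by omega)]
        simp [hs, List.getElem_drop]
      · rw [List.getD_eq_getElem _ _ (by simp [hdroplen]; rw [hslen]; omega),
          List.getElem_append_right (by omega)]
        simp only [List.getElem_take]
        simp only [hs, List.getElem_map, List.getElem_range, hdroplen, decide_eq_true_eq,
          List.length_drop, List.length_map, List.length_range]
        omega
    rw [hL, hR] at E
    simpa using E
  have hπ : ∀ p, π p = Stmt16Aux.rho h₀ h₁ (h₀ + h₁) p := by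
    intro p
    rw [Stmt16Aux.rho_final]
    split_ifs with h1 h2
    · have := key p (by omega) (p + h₁) (by omega) (Or.inr ⟨by omega, by omega⟩)
      rw [Equiv.symm_apply_eq] at this
      omega
    · have := key p (by omega) (p - h₀) (by omega) (Or.inl ⟨by omega, by omega⟩)
      rw [Equiv.symm_apply_eq] at this
      omega
    · exact hfix p (by omega)
  refine ⟨fun k => Stmt16Aux.layer h₀ h₁ k,
    fun k => Stmt16Aux.isNILayer_layer h₀ h₁ k, ?_⟩
  have hofn : List.ofFn (fun k : Fin (h₀ + h₁) => Stmt16Aux.layer h₀ h₁ ↑k)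
      = (List.range (h₀ + h₁)).map (Stmt16Aux.layer h₀ h₁) := by
    apply List.ext_getElem <;> simp
  rw [hofn, ← List.map_reverse]
  ext x
  rw [Stmt16Aux.prod_layers, ← hπ]
end

section
/- Let 𝛔 be a non-interacting SWAP of height h with indices I, let s be an ℓ-bit string with ℓ ≤ h, and let 0 ≤ m < ℓ. Then σ⋆(ω^m(σ_ℓ s)) = σ⋆(σ_{ℓ−m}(ω^m s)); in particular, σ⋆(ω(σ_ℓ s)) = σ⋆(σ_{ℓ−1}(ωs)). -/
/-- `s` is a `τL`-truncation: `s` is a prefix of some element of `τ_h L`. -/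
def IsTrunc (τh : Equiv.Perm ℕ) (L : Finset (List Bool)) (s : List Bool) : Prop :=
  ∃ t ∈ L, s <+: permList τh t

/-- `s` is `τL`-branching: either `s` is empty, or `s ∈ τ_h L`, or `0 < ‖s‖ < h` and both
`s0` and `s1` are `τL`-truncations. -/
def IsBranching (h : ℕ) (τh : Equiv.Perm ℕ) (L : Finset (List Bool)) (s : List Bool) :
    Prop :=
  s = [] ∨ (∃ t ∈ L, s = permList τh t) ∨
    (0 < s.length ∧ s.length < h ∧
      IsTrunc τh L (s ++ [false]) ∧ IsTrunc τh L (s ++ [true]))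

/-- The branching truncation `Ω^{τL} s`: the longest strict prefix of `s` that is
`τL`-branching. -/
noncomputable def Omega (h : ℕ) (τh : Equiv.Perm ℕ) (L : Finset (List Bool))
    (s : List Bool) : List Bool :=
  s.take (sSup {k | k < s.length ∧ IsBranching h τh L (s.take k)})

lemma swap_invol {h : ℕ} {I : Finset ℕ} {σ : ℕ → Equiv.Perm ℕ}
    (hσ : IsNonInteractingSwap h I σ) (ℓ j : ℕ) : σ ℓ (σ ℓ j) = j := by
  obtain ⟨h1, h2, h3, h4⟩ := hσ
  by_cases hj : ∃ i ∈ I, i + 2 ≤ ℓ ∧ (j = i ∨ j = i + 1)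
  · obtain ⟨i, hi, hil, hj⟩ := hj
    rcases hj with hj | hj
    · rw [hj, (h3 ℓ i hi hil).1, (h3 ℓ i hi hil).2]
    · rw [hj, (h3 ℓ i hi hil).2, (h3 ℓ i hi hil).1]
  · rw [h4 ℓ j hj, h4 ℓ j hj]

lemma swap_symm {h : ℕ} {I : Finset ℕ} {σ : ℕ → Equiv.Perm ℕ}
    (hσ : IsNonInteractingSwap h I σ) (ℓ j : ℕ) : (σ ℓ).symm j = σ ℓ j := by
  conv_lhs => rw [← swap_invol hσ ℓ j]
  exact (σ ℓ).symm_apply_apply _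

lemma swap_agree {h : ℕ} {I : Finset ℕ} {σ : ℕ → Equiv.Perm ℕ}
    (hσ : IsNonInteractingSwap h I σ) (ℓ n j : ℕ) (hn : n ≤ ℓ) (hj : j < n)
    (hcond : j ≠ n - 1 ∨ n - 1 ∉ I) : σ n j = σ ℓ j ∧ σ n j < n := by
  obtain ⟨h1, h2, h3, h4⟩ := hσ
  by_cases hex : ∃ i ∈ I, i + 2 ≤ ℓ ∧ (j = i ∨ j = i + 1)
  · obtain ⟨i, hi, hil, hji⟩ := hex
    rcases hji with hji | hji
    · have hin : i + 2 ≤ n := by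
        by_contra hc
        push_neg at hc
        have hie : i = n - 1 := by omega
        rcases hcond with hne | hni
        · exact hne (hji.trans hie)
        · exact hni (hie ▸ hi)
      rw [hji, (h3 n i hi hin).1, (h3 ℓ i hi hil).1]
      exact ⟨rfl, by omega⟩
    · have hin : i + 2 ≤ n := by omega
      rw [hji, (h3 n i hi hin).2, (h3 ℓ i hi hil).2]
      exact ⟨rfl, by omega⟩
  · have hex' : ¬∃ i ∈ I, i + 2 ≤ n ∧ (j = i ∨ j = i + 1) := by
      rintro ⟨i, hi, hin, hji⟩; exact hex ⟨i, hi, by omega, hji⟩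
    rw [h4 n j hex', h4 ℓ j hex]
    exact ⟨rfl, hj⟩

lemma dropLast_iter {α : Type*} (m : ℕ) (l : List α) :
    List.dropLast^[m] l = l.take (l.length - m) := by
  induction m generalizing l with
  | zero => simp
  | succ m ih =>
    rw [Function.iterate_succ_apply, ih, List.dropLast_eq_take, List.take_take,
      List.length_take]
    congr 1
    omega

theorem stmt17 (h : ℕ) (I : Finset ℕ) (σ : ℕ → Equiv.Perm ℕ)
    (hσ : IsNonInteractingSwap h I σ)
    (s : List Bool) (hs : s.length ≤ h) :
    (∀ m, m < s.length →
      sigmaStar I (List.dropLast^[m] (permList (σ s.length) s)) =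
        sigmaStar I (permList (σ (s.length - m)) (List.dropLast^[m] s))) ∧
    (0 < s.length →
      sigmaStar I ((permList (σ s.length) s).dropLast) =
        sigmaStar I (permList (σ (s.length - 1)) s.dropLast)) := by
  have key : ∀ m, m < s.length →
      sigmaStar I (List.dropLast^[m] (permList (σ s.length) s)) =
        sigmaStar I (permList (σ (s.length - m)) (List.dropLast^[m] s)) := by
    intro m hm
    set ℓ := s.length with hℓ
    rcases Nat.eq_zero_or_pos m with rfl | hm1
    · simp
    set n := ℓ - m with hn
    have hn1 : 1 ≤ n := by omega
    have hnℓ : n ≤ ℓ := by omega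
    -- the two lists
    have hlenperm : (permList (σ ℓ) s).length = ℓ := by simp [permList]; rfl
    have hA : List.dropLast^[m] (permList (σ ℓ) s) =
        (List.range n).map (fun j => s.getD (σ ℓ j) default) := by
      rw [dropLast_iter, hlenperm, permList, ← List.map_take, List.take_range]
      have : min (ℓ - m) ℓ = n := by omega
      rw [this]
      exact List.map_congr_left fun j _ => by rw [swap_symm hσ]
    have hBlen : (List.dropLast^[m] s).length = n := by
      rw [dropLast_iter, List.length_take]; omega
    have hB : permList (σ n) (List.dropLast^[m] s) =
        (List.range n).map (fun j => (s.take n).getD (σ n j) default) := by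
      rw [permList, hBlen, dropLast_iter, ← hℓ, ← hn]
      exact List.map_congr_left fun j _ => by rw [swap_symm hσ]
    have hval : ∀ j < n, (j ≠ n - 1 ∨ n - 1 ∉ I) →
        (s.take n).getD (σ n j) default = s.getD (σ ℓ j) default := by
      intro j hj hcond
      obtain ⟨heq, hlt⟩ := swap_agree hσ ℓ n j hnℓ hj hcond
      rw [heq] at hlt ⊢
      rw [List.getD_eq_getElem _ _ (by simp; omega),
        List.getD_eq_getElem _ _ (by omega)]
      simp [List.getElem_take]
    rw [hA, hB]
    by_cases hI : n - 1 ∈ I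
    · -- both sides have last entry starred; dropLasts agree
      have hne1 : ((List.range n).map (fun j => s.getD (σ ℓ j) default)) ≠ [] := by
        simp; omega
      have hne2 : ((List.range n).map (fun j => (s.take n).getD (σ n j) default)) ≠ [] := by
        simp; omega
      rw [sigmaStar, sigmaStar, if_pos ⟨hne1, by simpa using hI⟩,
        if_pos ⟨hne2, by simpa using hI⟩]
      congr 2
      rw [List.dropLast_eq_take, List.dropLast_eq_take]
      simp only [List.length_map, List.length_range]
      rw [← List.map_take, ← List.map_take, List.take_range]
      exact (List.map_congr_left fun j hj => by
        rw [List.mem_range] at hj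
        exact hval j (by omega) (Or.inl (by omega))).symm
    · -- lists are equal
      congr 1
      exact (List.map_congr_left fun j hj => by
        rw [List.mem_range] at hj
        exact hval j hj (Or.inr hI)).symm
  refine ⟨key, fun hpos => ?_⟩
  rcases Nat.lt_or_ge 1 s.length with h1 | h1
  · have := key 1 h1
    simpa using this
  · have hs1 : s.length = 1 := by omega
    have hd : s.dropLast = [] := by
      rw [List.dropLast_eq_take, hs1]; simp
    have hd2 : (permList (σ s.length) s).dropLast = [] := by
      rw [List.dropLast_eq_take]
      simp [permList, hs1]
    rw [hd, hd2]
    simp [permList, sigmaStar]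
end
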